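/- arXiv:2311.15388 — 6 statements merged into one kernel-verified Lean document; each statement's English description precedes it below -/
import Mathlib

section
/- For every integer n ≥ 1, the number of Arndt compositions of n equals the n-th Fibonacci number, i.e. a(n) = F_n. Equivalently, the formal power series Σ_{n≥0} a(n) xⁿ over ℤ satisfies (1 - x - x²) · Σ_{n≥0} a(n) xⁿ = 1 - x². -/
open Finset


/-- `l` is a composition of `n`: a finite list of positive integers summing to `n`
(the empty list is the unique composition of `0`). -/
def IsComposition (n : ℕ) (l : List ℕ) : Prop :=
  (∀ x ∈ l, 0 < x) ∧ l.sum = n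

/-- The Arndt condition: `σ_{2i-1} > σ_{2i}` (1-based) for every `i` with `2i ≤ ℓ`;
with 0-based indices, `l[2i] > l[2i+1]` whenever `2i+1 < l.length`. -/
def IsArndt (l : List ℕ) : Prop :=
  ∀ i : ℕ, 2 * i + 1 < l.length → l.getD (2 * i + 1) 0 < l.getD (2 * i) 0

/-- `arndt n` is the number of Arndt compositions of `n`. -/
noncomputable def arndt (n : ℕ) : ℕ :=
  Set.ncard {l : List ℕ | IsComposition n l ∧ IsArndt l}

/-- `arndtParts n m` is the number of Arndt compositions of `n` with exactly `m` parts. -/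
noncomputable def arndtParts (n m : ℕ) : ℕ :=
  Set.ncard {l : List ℕ | IsComposition n l ∧ IsArndt l ∧ l.length = m}

/-- The generalized binomial coefficient `C(a,b) = a(a-1)⋯(a-b+1)/b!` for an integer `a`
and a natural number `b` (represented as a nonnegative integer); it is `0` for negative `b`. -/
def genChoose (a b : ℤ) : ℤ :=
  if 0 ≤ b then (∏ i ∈ Finset.range b.toNat, (a - (i : ℤ))) / (b.toNat.factorial : ℤ) else 0

lemma isArndt_nil : IsArndt [] := fun i h => by simp at h

lemma isArndt_singleton (a : ℕ) : IsArndt [a] := fun i h => by simp at h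

lemma isArndt_cons_cons {x y : ℕ} {l : List ℕ} :
    IsArndt (x :: y :: l) ↔ y < x ∧ IsArndt l := by
  constructor
  · intro h
    refine ⟨by simpa using h 0 (by simp), fun i hi => ?_⟩
    have h2 := h (i + 1) (by simp only [List.length_cons]; omega)
    have e1 : 2 * (i + 1) + 1 = (2 * i + 1) + 1 + 1 := by ring
    have e2 : 2 * (i + 1) = (2 * i) + 1 + 1 := by ring
    rw [e1, e2, List.getD_cons_succ, List.getD_cons_succ, List.getD_cons_succ,
      List.getD_cons_succ] at h2
    exact h2
  · rintro ⟨hxy, h⟩ i hi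
    cases i with
    | zero => simpa using hxy
    | succ j =>
      have h2 := h j (by simp only [List.length_cons] at hi; omega)
      have e1 : 2 * (j + 1) + 1 = (2 * j + 1) + 1 + 1 := by ring
      have e2 : 2 * (j + 1) = (2 * j) + 1 + 1 := by ring
      rw [e1, e2, List.getD_cons_succ, List.getD_cons_succ, List.getD_cons_succ,
        List.getD_cons_succ]
      exact h2

lemma finite_arndtSet (n : ℕ) : {l : List ℕ | IsComposition n l ∧ IsArndt l}.Finite := by
  apply Set.Finite.subset (Set.finite_range (Composition.blocks (n := n)))
  rintro l ⟨⟨h1, h2⟩, -⟩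
  exact ⟨⟨l, fun hi => h1 _ hi, h2⟩, rfl⟩

noncomputable def Afin (n : ℕ) : Finset (List ℕ) := (finite_arndtSet n).toFinset

lemma mem_Afin {n : ℕ} {l : List ℕ} :
    l ∈ Afin n ↔ (∀ x ∈ l, 0 < x) ∧ l.sum = n ∧ IsArndt l := by
  simp [Afin, Set.Finite.mem_toFinset, IsComposition, and_assoc]

lemma arndt_eq_card (n : ℕ) : arndt n = (Afin n).card :=
  Set.ncard_eq_toFinset_card _ (finite_arndtSet n)

noncomputable def Qf (n : ℕ) : Finset ((_ : ℕ) × ℕ) :=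
  (Ico 1 (n + 1)).sigma fun b => range (n - 2 * b)

lemma mem_Qf {n : ℕ} {p : (_ : ℕ) × ℕ} :
    p ∈ Qf n ↔ (1 ≤ p.1 ∧ p.1 < n + 1) ∧ p.2 < n - 2 * p.1 := by
  simp [Qf, mem_sigma, mem_Ico, mem_range]

lemma decomp (n : ℕ) (hn : 1 ≤ n) :
    Afin n = insert [n]
      ((Qf n).biUnion fun p => (Afin p.2).image fun ρ => (n - p.1 - p.2) :: p.1 :: ρ) := by
  ext l
  simp only [mem_insert, mem_biUnion, mem_image, mem_Qf, mem_Afin]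
  constructor
  · rintro ⟨h1, h2, h3⟩
    match l with
    | [] => simp at h2; omega
    | [a] => left; simp at h2; simp [h2]
    | a :: b :: ρ =>
      right
      have hb : 0 < b := h1 b (by simp)
      have ha : b < a := (isArndt_cons_cons.1 h3).1
      have hsum : a + (b + ρ.sum) = n := by simpa using h2
      refine ⟨⟨b, ρ.sum⟩, ⟨⟨?_, ?_⟩, ?_⟩,
        ρ, ⟨fun x hx => h1 x (by simp [hx]), rfl, (isArndt_cons_cons.1 h3).2⟩, ?_⟩
      · exact hb
      · show b < n + 1; omega
      · show ρ.sum < n - 2 * b; omega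
      · show (n - b - ρ.sum) :: b :: ρ = a :: b :: ρ
        congr 1
        omega
  · rintro (rfl | ⟨⟨b, k⟩, ⟨⟨hb1, hb2⟩, hk⟩, ρ, ⟨hρ1, hρ2, hρ3⟩, rfl⟩)
    · exact ⟨by simp; omega, by simp, isArndt_singleton n⟩
    · simp only at hk hb1 hb2 ⊢
      refine ⟨?_, ?_, ?_⟩
      · intro x hx
        rcases List.mem_cons.1 hx with rfl | hx
        · omega
        · rcases List.mem_cons.1 hx with rfl | hx
          · omega
          · exact hρ1 x hx
      · simp only [List.sum_cons, hρ2]; omega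
      · exact isArndt_cons_cons.2 ⟨by omega, hρ3⟩

lemma card_decomp (n : ℕ) (hn : 1 ≤ n) :
    (Afin n).card = 1 + ∑ p ∈ Qf n, (Afin p.2).card := by
  have hdisj : ∀ p ∈ Qf n, ∀ q ∈ Qf n, p ≠ q →
      Disjoint ((Afin p.2).image fun ρ => (n - p.1 - p.2) :: p.1 :: ρ)
        ((Afin q.2).image fun ρ => (n - q.1 - q.2) :: q.1 :: ρ) := by
    rintro ⟨b, k⟩ hp ⟨b', k'⟩ hq hpq
    rw [Finset.disjoint_left]
    rintro l hl hl'
    simp only [mem_image, mem_Afin] at hl hl'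
    obtain ⟨ρ, ⟨_, hs, _⟩, rfl⟩ := hl
    obtain ⟨ρ', ⟨_, hs', _⟩, he⟩ := hl'
    simp only [List.cons.injEq] at he
    exact hpq (by obtain ⟨e1, e2, e3⟩ := he; subst e2 e3; simp [← hs, hs'])
  have hnm : [n] ∉ (Qf n).biUnion
      fun p => (Afin p.2).image fun ρ => (n - p.1 - p.2) :: p.1 :: ρ := by
    intro h
    simp only [mem_biUnion, mem_image] at h
    obtain ⟨p, hp, ρ, hρ, he⟩ := h
    simp at he
  rw [decomp n hn, card_insert_of_notMem hnm, card_biUnion hdisj, add_comm]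
  refine congrArg (1 + ·) (sum_congr rfl fun p _ => ?_)
  exact card_image_of_injective _ (fun a b h => by simpa using h)

def F' (n : ℕ) : ℕ := if n = 0 then 1 else Nat.fib n

lemma sum_F' (m : ℕ) (hm : 1 ≤ m) : ∑ k ∈ range m, F' k = Nat.fib (m + 1) := by
  induction m with
  | zero => omega
  | succ m ih =>
    rcases Nat.eq_zero_or_pos m with rfl | hm'
    · simp [F']
    · rw [Finset.sum_range_succ, ih hm', F', if_neg (by omega), Nat.fib_add_two,
        Nat.add_comm]

noncomputable def Cc (n : ℕ) : ℕ := ∑ b ∈ range n, ∑ k ∈ range (n - 2 * b - 2), F' k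

lemma Cc_rec (m : ℕ) : Cc (m + 2) = Cc m + ∑ k ∈ range m, F' k := by
  have h1 : Cc (m + 2) = (∑ b ∈ range (m + 1), ∑ k ∈ range (m - 2 * b - 2), F' k)
      + ∑ k ∈ range m, F' k := by
    rw [Cc, Finset.sum_range_succ']
    congr 1
    · refine sum_congr rfl fun b _ => ?_
      rw [show m + 2 - 2 * (b + 1) - 2 = m - 2 * b - 2 from by omega]
  rw [h1, Finset.sum_range_succ, show m - 2 * m - 2 = 0 from by omega]
  simp only [Finset.sum_range_zero, add_zero]
  rfl

lemma Cc_eq : ∀ n, 1 ≤ n → Cc n + 1 = Nat.fib n := by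
  intro n
  induction n using Nat.strong_induction_on with
  | _ n ih =>
    match n with
    | 0 => intro h; omega
    | 1 => intro _; decide
    | 2 => intro _; decide
    | (m + 3) =>
      intro _
      rw [Cc_rec (m + 1), sum_F' (m + 1) (by omega)]
      have h1 := ih (m + 1) (by omega) (by omega)
      have hfib : Nat.fib (m + 3) = Nat.fib (m + 1) + Nat.fib (m + 1 + 1) :=
        Nat.fib_add_two
      omega

lemma sum_Qf (n : ℕ) : ∑ p ∈ Qf n, F' p.2 = Cc n := by
  rw [Qf, Finset.sum_sigma, Finset.sum_Ico_eq_sum_range]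
  simp only [Nat.add_sub_cancel]
  refine sum_congr rfl fun b _ => ?_
  rw [show n - 2 * (1 + b) = n - 2 * b - 2 from by omega]

lemma arndt_eq_F' : ∀ n, arndt n = F' n := by
  intro n
  induction n using Nat.strong_induction_on with
  | _ n ih =>
    rcases Nat.eq_zero_or_pos n with rfl | hn
    · rw [arndt_eq_card]
      have h0 : Afin 0 = {([] : List ℕ)} := by
        ext l
        simp only [mem_Afin, mem_singleton]
        constructor
        · rintro ⟨h1, h2, _⟩
          match l with
          | [] => rfl
          | a :: t =>
            exfalso
            have := h1 a (by simp)
            simp only [List.sum_cons] at h2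
            omega
        · rintro rfl
          exact ⟨by simp, by simp, isArndt_nil⟩
      rw [h0]
      rfl
    · rw [arndt_eq_card, card_decomp n hn]
      have hsum : ∀ p ∈ Qf n, (Afin p.2).card = F' p.2 := by
        intro p hp
        rw [mem_Qf] at hp
        rw [← arndt_eq_card, ih p.2 (by omega)]
      rw [Finset.sum_congr rfl hsum, sum_Qf, F', if_neg (by omega)]
      have := Cc_eq n hn
      omega

/-- the number of Arndt compositions of `n` is the `n`-th Fibonacci number;
equivalently `(1 - x - x²) · Σ_{n≥0} a(n) xⁿ = 1 - x²` as formal power series over `ℤ`. -/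
theorem arndt_eq_fib :
    (∀ n : ℕ, 1 ≤ n → arndt n = Nat.fib n) ∧
    (1 - PowerSeries.X - PowerSeries.X ^ 2) *
        PowerSeries.mk (fun n => (arndt n : ℤ)) =
      1 - PowerSeries.X ^ 2 := by
  have key : ∀ n, 1 ≤ n → arndt n = Nat.fib n := by
    intro n hn
    rw [arndt_eq_F', F', if_neg (by omega)]
  refine ⟨key, ?_⟩
  have a0 : arndt 0 = 1 := by rw [arndt_eq_F']; rfl
  ext n
  rw [sub_mul, sub_mul, one_mul]
  simp only [map_sub]
  have hfa : ∀ m, 1 ≤ m → ((arndt m : ℤ)) = (Nat.fib m : ℤ) := by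
    intro m hm; rw [key m hm]
  match n with
  | 0 =>
    simp [PowerSeries.coeff_zero_X_mul, PowerSeries.coeff_X_pow_mul',
      PowerSeries.coeff_mk, PowerSeries.coeff_one, PowerSeries.coeff_X_pow, a0]
  | 1 =>
    rw [PowerSeries.coeff_succ_X_mul, PowerSeries.coeff_X_pow_mul']
    simp only [PowerSeries.coeff_mk, PowerSeries.coeff_one, PowerSeries.coeff_X_pow,
      a0, key 1 le_rfl]
    norm_num
  | 2 =>
    rw [PowerSeries.coeff_succ_X_mul, PowerSeries.coeff_X_pow_mul']
    simp only [PowerSeries.coeff_mk, PowerSeries.coeff_one, PowerSeries.coeff_X_pow,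
      hfa 2 (by omega), hfa 1 (by omega), a0]
    norm_num
  | (k + 3) =>
    rw [show k + 3 = (k + 2) + 1 from rfl, PowerSeries.coeff_succ_X_mul,
      PowerSeries.coeff_X_pow_mul']
    simp only [PowerSeries.coeff_mk, PowerSeries.coeff_one, PowerSeries.coeff_X_pow,
      if_pos (by omega : 2 ≤ k + 2 + 1)]
    rw [show k + 2 + 1 - 2 = k + 1 from by omega]
    rw [hfa (k + 2 + 1) (by omega), hfa (k + 2) (by omega), hfa (k + 1) (by omega)]
    have : Nat.fib (k + 3) = Nat.fib (k + 1) + Nat.fib (k + 2) := Nat.fib_add_two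
    rw [if_neg (by omega), if_neg (by omega), show k + 2 + 1 = k + 3 from rfl, this]
    push_cast
    ring
end

section
/- For all integers n ≥ 3 and m ≥ 2, the numbers a(n,m) satisfy the recurrence a(n,m) + a(n-3,m) = a(n-1,m) + a(n-2,m) + a(n-3,m-2), i.e. a(n,m) = a(n-1,m) + a(n-2,m) − a(n-3,m) + a(n-3,m-2). -/
/-! ### Auxiliary machinery -/

/-- The finset of all compositions of `n`, as lists. -/
noncomputable def compFinset (n : ℕ) : Finset (List ℕ) :=
  Finset.image Composition.blocks (Finset.univ : Finset (Composition n))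

lemma mem_compFinset {n : ℕ} {l : List ℕ} : l ∈ compFinset n ↔ IsComposition n l := by
  simp only [compFinset, Finset.mem_image, Finset.mem_univ, true_and]
  constructor
  · rintro ⟨c, rfl⟩
    exact ⟨fun x hx => c.blocks_pos hx, c.blocks_sum⟩
  · rintro ⟨h1, h2⟩
    exact ⟨⟨l, fun hx => h1 _ hx, h2⟩, rfl⟩

open Classical in
/-- Arndt compositions of `n` with `m` parts, as a finset. -/
noncomputable def AF (n m : ℕ) : Finset (List ℕ) :=
  (compFinset n).filter (fun l => IsArndt l ∧ l.length = m)

lemma mem_AF {n m : ℕ} {l : List ℕ} :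
    l ∈ AF n m ↔ IsComposition n l ∧ IsArndt l ∧ l.length = m := by
  classical
  simp [AF, mem_compFinset, Finset.mem_filter]

lemma arndtParts_eq (n m : ℕ) : arndtParts n m = (AF n m).card := by
  have h : {l : List ℕ | IsComposition n l ∧ IsArndt l ∧ l.length = m} = ↑(AF n m) := by
    ext l; simp [mem_AF]
  rw [arndtParts, h, Set.ncard_coe_finset]

/-- Index set of admissible first pairs `(k, j)` with `k > j ≥ 1`, `k + j ≤ n`. -/
def T (n : ℕ) : Finset (ℕ × ℕ) :=
  (Finset.range (n+1) ×ˢ Finset.range (n+1)).filter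
    (fun x => 0 < x.2 ∧ x.2 < x.1 ∧ x.1 + x.2 ≤ n)

lemma isArndt_cons_cons_s2 {k j : ℕ} {t : List ℕ} :
    IsArndt (k :: j :: t) ↔ j < k ∧ IsArndt t := by
  constructor
  · intro h
    refine ⟨by simpa using h 0 (by simp), fun i hi => ?_⟩
    have := h (i+1) (by simp only [List.length_cons]; omega)
    have e1 : 2*(i+1)+1 = (2*i+1)+1+1 := by ring
    have e2 : 2*(i+1) = (2*i)+1+1 := by ring
    rwa [e1, e2, List.getD_cons_succ, List.getD_cons_succ, List.getD_cons_succ,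
      List.getD_cons_succ] at this
  · rintro ⟨hjk, ht⟩ i hi
    match i with
    | 0 => simpa using hjk
    | i+1 =>
      have hi' : 2*i+1 < t.length := by simp only [List.length_cons] at hi; omega
      have := ht i hi'
      have e1 : 2*(i+1)+1 = (2*i+1)+1+1 := by ring
      have e2 : 2*(i+1) = (2*i)+1+1 := by ring
      rw [e1, e2, List.getD_cons_succ, List.getD_cons_succ, List.getD_cons_succ,
        List.getD_cons_succ]
      exact this

lemma AF_eq_biUnion (n m : ℕ) :
    AF n (m+2) = (T n).biUnion
      (fun x => (AF (n - x.1 - x.2) m).image (fun t => x.1 :: x.2 :: t)) := by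
  ext l
  simp only [Finset.mem_biUnion, Finset.mem_image, mem_AF, T, Finset.mem_filter,
    Finset.mem_product, Finset.mem_range]
  constructor
  · rintro ⟨⟨hpos, hsum⟩, harndt, hlen⟩
    obtain ⟨k, j, t, rfl⟩ : ∃ k j t, l = k :: j :: t := by
      rcases l with _ | ⟨k, _ | ⟨j, t⟩⟩
      · simp at hlen
      · simp at hlen
      · exact ⟨k, j, t, rfl⟩
    have hjk : j < k := by simpa using harndt 0 (by simp)
    have hj : 0 < j := hpos j (by simp)
    have hsum' : k + (j + t.sum) = n := by simpa using hsum
    refine ⟨(k, j), ⟨⟨by omega, by omega⟩, hj, hjk, by omega⟩, t,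
      ⟨⟨fun x hx => hpos x (by simp [hx]), by simp; omega⟩,
       (isArndt_cons_cons_s2.mp harndt).2, by simpa using hlen⟩, rfl⟩
  · rintro ⟨⟨k, j⟩, ⟨⟨hk, hj⟩, hj0, hjk, hle⟩, t, ⟨⟨hpos, hsum⟩, harndt, hlen⟩, rfl⟩
    refine ⟨⟨?_, ?_⟩, isArndt_cons_cons_s2.mpr ⟨hjk, harndt⟩, by simp [hlen]⟩
    · intro x hx
      have hx' : x = k ∨ x = j ∨ x ∈ t := by simpa using hx
      rcases hx' with rfl | rfl | hx''
      · omega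
      · omega
      · exact hpos x hx''
    · simp only [List.sum_cons]; omega

lemma card_AF (n m : ℕ) :
    (AF n (m+2)).card = ∑ x ∈ T n, (AF (n - x.1 - x.2) m).card := by
  classical
  rw [AF_eq_biUnion, Finset.card_biUnion]
  · exact Finset.sum_congr rfl fun x _ => Finset.card_image_of_injective _
      (fun a b h => by simpa using h)
  · intro x hx y hy hxy
    rw [Function.onFun, Finset.disjoint_left]
    intro l hl1 hl2
    simp only [Finset.mem_image] at hl1 hl2
    obtain ⟨t, _, rfl⟩ := hl1
    obtain ⟨t', _, h⟩ := hl2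
    apply hxy
    injection h with h1 h
    injection h with h2 _
    exact Prod.ext h1.symm h2.symm

lemma card_fiber (n s : ℕ) (hs : s ≤ n) :
    ((T n).filter (fun x => x.1 + x.2 = s)).card = (s-1)/2 := by
  rw [show (s-1)/2 = (Finset.Ico 1 ((s-1)/2 + 1)).card by simp]
  refine Finset.card_bij' (fun x _ => x.2) (fun j _ => (s - j, j)) ?_ ?_ ?_ ?_
  · intro x hx
    simp only [T, Finset.mem_filter, Finset.mem_product, Finset.mem_range] at hx
    simp only [Finset.mem_Ico]
    omega
  · intro j hj
    simp only [Finset.mem_Ico] at hj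
    simp only [T, Finset.mem_filter, Finset.mem_product, Finset.mem_range]
    omega
  · rintro ⟨a, b⟩ hx
    have hx2 : a + b = s := (Finset.mem_filter.mp hx).2
    have hx1 := (Finset.mem_filter.mp hx).1
    simp only [T, Finset.mem_filter, Finset.mem_product, Finset.mem_range] at hx1
    show ((s - b : ℕ), b) = (a, b)
    simp only [Prod.mk.injEq, and_true]
    omega
  · intro j hj; rfl

lemma sum_T (n : ℕ) (f : ℕ → ℕ) :
    ∑ x ∈ T n, f (x.1 + x.2) = ∑ s ∈ Finset.range (n+1), (s-1)/2 * f s := by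
  classical
  rw [← Finset.sum_fiberwise_of_maps_to (g := fun x : ℕ × ℕ => x.1 + x.2)
    (t := Finset.range (n+1)) (fun x hx => ?_) (fun x => f (x.1 + x.2))]
  · refine Finset.sum_congr rfl fun s hs => ?_
    have hs' : s ≤ n := by
      have := Finset.mem_range.mp hs; omega
    calc ∑ x ∈ (T n).filter (fun x => x.1 + x.2 = s), f (x.1 + x.2)
        = ∑ x ∈ (T n).filter (fun x => x.1 + x.2 = s), f s := by
          refine Finset.sum_congr rfl fun x hx => ?_
          rw [(Finset.mem_filter.mp hx).2]
      _ = ((T n).filter (fun x => x.1 + x.2 = s)).card * f s := by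
          rw [Finset.sum_const, smul_eq_mul]
      _ = (s-1)/2 * f s := by rw [card_fiber n s hs']
  · simp only [T, Finset.mem_filter, Finset.mem_product, Finset.mem_range] at hx
    simp only [Finset.mem_range]
    omega

lemma arndtParts_sum (n m : ℕ) :
    arndtParts n (m+2) = ∑ s ∈ Finset.range (n+1), (s-1)/2 * arndtParts (n-s) m := by
  rw [arndtParts_eq, card_AF]
  calc ∑ x ∈ T n, (AF (n - x.1 - x.2) m).card
      = ∑ x ∈ T n, (fun s => (AF (n - s) m).card) (x.1 + x.2) := by
        refine Finset.sum_congr rfl fun x _ => ?_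
        simp only [Nat.sub_sub]
    _ = ∑ s ∈ Finset.range (n+1), (s-1)/2 * (AF (n-s) m).card := sum_T n (fun s => (AF (n - s) m).card)
    _ = _ := by
        refine Finset.sum_congr rfl fun s _ => ?_
        rw [arndtParts_eq]

lemma arndtParts_sum' (n m : ℕ) :
    arndtParts n (m+2) = ∑ r ∈ Finset.range (n+1), (n-r-1)/2 * arndtParts r m := by
  rw [arndtParts_sum]
  refine Finset.sum_nbij' (fun s => n - s) (fun r => n - r) ?_ ?_ ?_ ?_ ?_
  · intro a ha
    simp only [Finset.mem_range] at ha ⊢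
    omega
  · intro a ha
    simp only [Finset.mem_range] at ha ⊢
    omega
  · intro a ha
    simp only [Finset.mem_range] at ha
    show n - (n - a) = a
    omega
  · intro a ha
    simp only [Finset.mem_range] at ha
    show n - (n - a) = a
    omega
  · intro a ha
    simp only [Finset.mem_range] at ha
    show (a-1)/2 * arndtParts (n-a) m = (n - (n - a) - 1)/2 * arndtParts (n - a) m
    have h2 : n - (n - a) = a := by omega
    rw [h2]

/-- for `n ≥ 3`, `m ≥ 2`,
`a(n,m) + a(n-3,m) = a(n-1,m) + a(n-2,m) + a(n-3,m-2)`. -/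
theorem arndtParts_recurrence (n m : ℕ) (hn : 3 ≤ n) (hm : 2 ≤ m) :
    arndtParts n m + arndtParts (n - 3) m =
      arndtParts (n - 1) m + arndtParts (n - 2) m + arndtParts (n - 3) (m - 2) := by
  classical
  obtain ⟨m', rfl⟩ : ∃ m', m = m' + 2 := ⟨m - 2, by omega⟩
  have key : ∀ N, N ≤ n →
      arndtParts N (m'+2) = ∑ r ∈ Finset.range (n+1), (N-r-1)/2 * arndtParts r m' := by
    intro N hN
    rw [arndtParts_sum']
    refine Finset.sum_subset ?_ ?_
    · intro r hr
      simp only [Finset.mem_range] at hr ⊢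
      omega
    · intro r hr hr'
      simp only [Finset.mem_range] at hr hr'
      have h0 : N - r - 1 = 0 := by omega
      rw [h0]
      simp
  have h3 : m' + 2 - 2 = m' := by omega
  rw [h3, key n le_rfl, key (n-1) (by omega), key (n-2) (by omega), key (n-3) (by omega)]
  have hd : arndtParts (n-3) m'
      = ∑ r ∈ Finset.range (n+1), (if r = n-3 then 1 else 0) * arndtParts r m' := by
    have he : ∑ r ∈ Finset.range (n+1), (if r = n-3 then 1 else 0) * arndtParts r m'
        = ∑ r ∈ Finset.range (n+1), (if r = n-3 then arndtParts r m' else 0) := by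
      refine Finset.sum_congr rfl fun r _ => ?_
      split <;> simp
    rw [he, Finset.sum_ite_eq']
    rw [if_pos (Finset.mem_range.mpr (by omega))]
  rw [hd, ← Finset.sum_add_distrib, ← Finset.sum_add_distrib, ← Finset.sum_add_distrib]
  refine Finset.sum_congr rfl fun r hr => ?_
  have hr' : r ≤ n := by
    have := Finset.mem_range.mp hr; omega
  rw [← add_mul, ← add_mul, ← add_mul]
  congr 1
  split_ifs with h <;> omega
end

section
/- For all integers n, m ≥ 0, a(n,m) = Σ_{ℓ=0}^{n - m - ⌊m/2⌋} C(m + ℓ − 1, ℓ) · C(n − m − ℓ − 1, n − m − ⌊m/2⌋ − ℓ) · (−1)^{n − m − ⌊m/2⌋ − ℓ}, where the sum is empty when n − m − ⌊m/2⌋ < 0, and C(a, b) denotes the generalized binomial coefficient a(a−1)⋯(a−b+1)/b! for an integer a (possibly negative) and a natural number b. -/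
open PowerSeries Finset

namespace ArndtAux

noncomputable def O : PowerSeries ℤ := PowerSeries.mk fun _ => 1
noncomputable def E : PowerSeries ℤ := PowerSeries.mk fun n => if Even n then 1 else 0
noncomputable def B : PowerSeries ℤ := PowerSeries.mk fun n => (-1) ^ n

@[simp] lemma coeff_O (n : ℕ) : coeff n O = 1 := coeff_mk _ _
@[simp] lemma coeff_E (n : ℕ) : coeff n E = if Even n then 1 else 0 := coeff_mk _ _
@[simp] lemma coeff_B (n : ℕ) : coeff n B = (-1) ^ n := coeff_mk _ _

lemma hockey (m : ℕ) : ∀ N : ℕ, ∑ j ∈ range (N + 1), (m + j - 1).choose j = (m + N).choose N := by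
  intro N
  induction N with
  | zero => simp
  | succ N ih =>
    rw [sum_range_succ, ih]
    have h1 : m + (N + 1) - 1 = m + N := by omega
    have h3 : m + (N + 1) = m + N + 1 := by omega
    have h4 : (m + N + 1).choose (N + 1) = (m + N).choose N + (m + N).choose (N + 1) :=
      Nat.choose_succ_succ _ _
    rw [h1, h3]
    omega

lemma coeff_O_pow (m : ℕ) : ∀ N : ℕ, coeff N (O ^ m) = ((m + N - 1).choose N : ℤ) := by
  induction m with
  | zero =>
    intro N
    rcases Nat.eq_zero_or_pos N with h | h
    · subst h; simp
    · rw [pow_zero, coeff_one, if_neg (by omega)]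
      rw [Nat.choose_eq_zero_of_lt (by omega)]
      simp
  | succ m ih =>
    intro N
    rw [pow_succ, coeff_mul, Finset.Nat.sum_antidiagonal_eq_sum_range_succ_mk]
    simp only [coeff_O, mul_one, ih]
    rw [← Nat.cast_sum, Nat.succ_eq_add_one, hockey m N]
    have h2 : m + 1 + N - 1 = m + N := by omega
    rw [h2]

lemma B_eq : B = rescale (-1) O := by
  ext n
  rw [coeff_rescale]
  simp

lemma coeff_B_pow (k j : ℕ) : coeff j (B ^ k) = (-1) ^ j * ((k + j - 1).choose j : ℤ) := by
  rw [B_eq, ← map_pow, coeff_rescale, coeff_O_pow, mul_comm]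

lemma sumalt : ∀ n : ℕ, ∑ j ∈ range (n+1), ((-1:ℤ))^(n-j) = if Even n then 1 else 0 := by
  intro n
  induction n with
  | zero => simp
  | succ n ih =>
    rw [sum_range_succ]
    have h1 : ∀ j ∈ range (n+1), ((-1:ℤ))^(n+1-j) = ((-1:ℤ))^(n-j) * (-1) := by
      intro j hj
      rw [mem_range] at hj
      rw [← pow_succ]
      congr 1
      omega
    rw [Finset.sum_congr rfl h1, ← Finset.sum_mul, ih]
    rcases Nat.even_or_odd n with h | h
    · rw [if_pos h, if_neg (by simp [Nat.even_add_one, h])]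
      simp
    · rw [if_neg (by simpa using h), if_pos (by simp [Nat.even_add_one]; simpa using h)]
      simp

lemma OB : O * B = E := by
  ext n
  rw [coeff_mul, Finset.Nat.sum_antidiagonal_eq_sum_range_succ_mk]
  simp only [coeff_O, coeff_B, one_mul, coeff_E]
  exact sumalt n

lemma key {m k : ℕ} (hk : k ≤ m) : O ^ m * B ^ k = O ^ (m - k) * E ^ k := by
  rw [← OB, mul_pow, ← mul_assoc, ← pow_add, Nat.sub_add_cancel hk]

lemma evens_count : ∀ j : ℕ, ∑ i ∈ range (j + 1), (if Even i then (1:ℤ) else 0)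
    = ((j / 2 + 1 : ℕ) : ℤ) := by
  intro j
  induction j with
  | zero => rw [sum_range_one]; norm_num
  | succ j ih =>
    rw [sum_range_succ, ih]
    rcases Nat.even_or_odd j with h | h
    · have h2 : j % 2 = 0 := Nat.even_iff.mp h
      rw [if_neg (by simp [Nat.even_add_one]; simpa using h)]
      have : (j + 1) / 2 = j / 2 := by omega
      rw [this, add_zero]
    · have h2 : j % 2 = 1 := Nat.odd_iff.mp h
      rw [if_pos (by simp [Nat.even_add_one]; simpa using h)]
      have : (j + 1) / 2 + 1 = (j / 2 + 1) + 1 := by omega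
      rw [this]
      push_cast
      ring

lemma coeff_OE (j : ℕ) : coeff j (O * E) = ((j / 2 + 1 : ℕ) : ℤ) := by
  rw [coeff_mul, Finset.Nat.sum_antidiagonal_eq_sum_range_succ_mk]
  simp only [coeff_O, coeff_E, one_mul]
  rw [← evens_count j]
  rw [← Finset.sum_range_reflect]
  apply Finset.sum_congr rfl
  intro i hi
  rw [mem_range] at hi
  congr 2
  omega

/-- The target count: `F n m` is (what will be shown to be) the number of Arndt
compositions of `n` with `m` parts, expressed as a power series coefficient. -/
noncomputable def F (n m : ℕ) : ℤ :=
  if m + m / 2 ≤ n then coeff (n - m - m / 2) (O ^ (m - m / 2) * E ^ (m / 2)) else 0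

def S (n m : ℕ) : Set (List ℕ) := {l | IsComposition n l ∧ IsArndt l ∧ l.length = m}

lemma isArndt_nil : IsArndt [] := by intro i hi; simp at hi

lemma isArndt_single (a : ℕ) : IsArndt [a] := by intro i hi; simp at hi

lemma getD_cons_cons (a b x : ℕ) (l : List ℕ) (i : ℕ) :
    (a :: b :: l).getD (i + 2) x = l.getD i x := rfl

lemma isArndt_cons_cons {a b : ℕ} {l : List ℕ} :
    IsArndt (a :: b :: l) ↔ b < a ∧ IsArndt l := by
  constructor
  · intro h
    refine ⟨by simpa using h 0 (by simp), ?_⟩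
    intro i hi
    have h2 := h (i + 1) (by simp; omega)
    have e1 : 2 * (i + 1) + 1 = (2 * i + 1) + 2 := by ring
    have e2 : 2 * (i + 1) = (2 * i) + 2 := by ring
    rwa [e1, e2, getD_cons_cons, getD_cons_cons] at h2
  · rintro ⟨hba, h⟩ i hi
    match i with
    | 0 => simpa using hba
    | j + 1 =>
      have hj : 2 * j + 1 < l.length := by simp at hi; omega
      have h2 := h j hj
      have e1 : 2 * (j + 1) + 1 = (2 * j + 1) + 2 := by ring
      have e2 : 2 * (j + 1) = (2 * j) + 2 := by ring
      rwa [e1, e2, getD_cons_cons, getD_cons_cons]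

lemma Fstep (n m : ℕ) :
    ∑ s ∈ range (n + 1), (((s - 1) / 2 : ℕ) : ℤ) * F (n - s) m = F n (m + 2) := by
  by_cases hn : m + 2 + (m + 2) / 2 ≤ n
  · have hk : (m + 2) / 2 = m / 2 + 1 := by omega
    have hkm : m / 2 ≤ m := Nat.div_le_self m 2
    set k := m / 2 with hkdef
    set N := n - (m + 2) - (k + 1) with hNdef
    have hNn : N + 3 = n - m - k := by omega
    have hrhs : F n (m + 2) = coeff N ((O ^ (m - k) * E ^ k) * (O * E)) := by
      rw [F, hk, if_pos (by omega)]
      have h1 : m + 2 - (k + 1) = (m - k) + 1 := by omega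
      have h2 : n - (m + 2) - (k + 1) = N := rfl
      rw [h1, h2]
      congr 1
      rw [pow_succ, pow_succ]
      ring
    rw [hrhs, coeff_mul, Finset.Nat.sum_antidiagonal_eq_sum_range_succ_mk]
    have hsplit : ∀ s ∈ range (n + 1), (((s - 1) / 2 : ℕ) : ℤ) * F (n - s) m
        = if 3 ≤ s ∧ s ≤ N + 3 then
            (((s - 1) / 2 : ℕ) : ℤ) * coeff (N + 3 - s) (O ^ (m - k) * E ^ k) else 0 := by
      intro s hs
      rw [mem_range] at hs
      by_cases h : 3 ≤ s ∧ s ≤ N + 3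
      · rw [if_pos h, F, if_pos (by omega)]
        have : n - s - m - k = N + 3 - s := by omega
        rw [this]
      · rw [if_neg h]
        push_neg at h
        by_cases h3 : 3 ≤ s
        · have := h h3
          rw [F, if_neg (by omega), mul_zero]
        · have : (s - 1) / 2 = 0 := by omega
          rw [this, Nat.cast_zero, zero_mul]
    rw [Finset.sum_congr rfl hsplit, ← Finset.sum_filter]
    have hfil : (range (n + 1)).filter (fun s => 3 ≤ s ∧ s ≤ N + 3) = Finset.Icc 3 (N + 3) := by
      ext s
      simp only [Finset.mem_filter, mem_range, Finset.mem_Icc]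
      omega
    rw [hfil]
    refine Finset.sum_nbij' (fun s => N + 3 - s) (fun i => N + 3 - i) ?_ ?_ ?_ ?_ ?_
    · intro s hs; rw [Finset.mem_Icc] at hs; show N + 3 - s ∈ range (N + 1); rw [mem_range]; omega
    · intro i hi; rw [mem_range] at hi; show N + 3 - i ∈ Finset.Icc 3 (N + 3); rw [Finset.mem_Icc]; omega
    · intro s hs; rw [Finset.mem_Icc] at hs; show N + 3 - (N + 3 - s) = s; omega
    · intro i hi; rw [mem_range] at hi; show N + 3 - (N + 3 - i) = i; omega
    · intro s hs
      rw [Finset.mem_Icc] at hs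
      show _ = coeff (N + 3 - s) (O ^ (m - k) * E ^ k) * coeff (N - (N + 3 - s)) (O * E)
      rw [coeff_OE]
      have h5 : N - (N + 3 - s) = s - 3 := by omega
      rw [h5]
      have h6 : (s - 3) / 2 + 1 = (s - 1) / 2 := by omega
      rw [h6, mul_comm]
  · rw [F, if_neg hn]
    apply Finset.sum_eq_zero
    intro s hs
    rw [mem_range] at hs
    by_cases h3 : 3 ≤ s
    · rw [F, if_neg (by omega), mul_zero]
    · have : (s - 1) / 2 = 0 := by omega
      rw [this, Nat.cast_zero, zero_mul]

lemma main (m : ℕ) : ∀ n, (S n m).Finite ∧ ((S n m).ncard : ℤ) = F n m := by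
  induction m using Nat.strong_induction_on with
  | _ m ih =>
  rcases m with _ | (_ | m)
  · intro n
    by_cases hn : n = 0
    · subst hn
      have hset : S 0 0 = {([] : List ℕ)} := by
        ext l
        simp only [S, Set.mem_setOf_eq, Set.mem_singleton_iff]
        constructor
        · rintro ⟨_, _, hlen⟩; exact List.length_eq_zero_iff.mp hlen
        · rintro rfl
          exact ⟨⟨by simp, by simp⟩, isArndt_nil, rfl⟩
      rw [hset]
      refine ⟨Set.finite_singleton _, ?_⟩
      rw [Set.ncard_singleton, F]
      norm_num
    · have hset : S n 0 = ∅ := by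
        ext l
        simp only [S, Set.mem_setOf_eq, Set.mem_empty_iff_false, iff_false]
        rintro ⟨⟨hpos, hsum⟩, _, hlen⟩
        rw [List.length_eq_zero_iff.mp hlen] at hsum
        simp at hsum
        exact hn hsum.symm
      rw [hset]
      refine ⟨Set.finite_empty, ?_⟩
      rw [Set.ncard_empty, F, if_pos (by omega)]
      norm_num [coeff_one, hn]
  · intro n
    by_cases hn : 1 ≤ n
    · have hset : S n 1 = {[n]} := by
        ext l
        simp only [S, Set.mem_setOf_eq, Set.mem_singleton_iff]
        constructor
        · rintro ⟨⟨hpos, hsum⟩, _, hlen⟩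
          obtain ⟨a, rfl⟩ := List.length_eq_one_iff.mp hlen
          simp only [List.sum_cons, List.sum_nil, add_zero] at hsum
          rw [hsum]
        · rintro rfl
          refine ⟨⟨?_, by simp⟩, isArndt_single n, rfl⟩
          intro x hx
          simp only [List.mem_cons, List.not_mem_nil, or_false] at hx
          omega
      rw [hset]
      refine ⟨Set.finite_singleton _, ?_⟩
      rw [Set.ncard_singleton, F, if_pos (by omega)]
      norm_num [coeff_O_pow]
    · have hn0 : n = 0 := by omega
      subst hn0
      have hset : S 0 1 = ∅ := by
        ext l
        simp only [S, Set.mem_setOf_eq, Set.mem_empty_iff_false, iff_false]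
        rintro ⟨⟨hpos, hsum⟩, _, hlen⟩
        obtain ⟨a, rfl⟩ := List.length_eq_one_iff.mp hlen
        simp only [List.sum_cons, List.sum_nil, add_zero] at hsum
        have := hpos a (by simp)
        omega
      rw [hset]
      refine ⟨Set.finite_empty, ?_⟩
      rw [Set.ncard_empty, F, if_neg (by omega)]
      norm_num
  · intro n
    have IH := ih m (by omega)
    set T : ℕ × ℕ → Finset (List ℕ) := fun p =>
      ((IH (n - p.1)).1.toFinset).image (fun t => (p.1 - p.2) :: p.2 :: t) with hT
    set P : Finset (ℕ × ℕ) :=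
      (range (n+1) ×ˢ range (n+1)).filter (fun p => 0 < p.2 ∧ 2 * p.2 + 1 ≤ p.1) with hP
    have hmemP : ∀ p : ℕ × ℕ, p ∈ P ↔ p.1 ≤ n ∧ 0 < p.2 ∧ 2 * p.2 + 1 ≤ p.1 := by
      intro p
      rw [hP]
      simp only [Finset.mem_filter, Finset.mem_product, mem_range]
      constructor
      · rintro ⟨⟨h1, h2⟩, h3, h4⟩; exact ⟨by omega, h3, h4⟩
      · rintro ⟨h1, h2, h3⟩; exact ⟨⟨by omega, by omega⟩, h2, h3⟩
    have hmem : ∀ l, l ∈ S n (m+1+1) ↔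
        ∃ p ∈ P, ∃ t ∈ S (n - p.1) m, l = (p.1 - p.2) :: p.2 :: t := by
      intro l
      constructor
      · rintro ⟨⟨hpos, hsum⟩, harndt, hlen⟩
        rcases l with _ | ⟨a, _ | ⟨b, t⟩⟩
        · simp at hlen
        · simp only [List.length_cons, List.length_nil] at hlen; omega
        · have hb : 0 < b := hpos b (by simp)
          have ha : 0 < a := hpos a (by simp)
          obtain ⟨hba, ht⟩ := isArndt_cons_cons.mp harndt
          have hsum' : a + b + t.sum = n := by
            simp only [List.sum_cons] at hsum
            omega
          have hlen' : t.length = m := by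
            simp only [List.length_cons] at hlen
            omega
          refine ⟨(a + b, b), ?_, t, ?_, ?_⟩
          · rw [hmemP]
            exact ⟨by omega, hb, by omega⟩
          · exact ⟨⟨fun x hx => hpos x (by simp [hx]), by simp; omega⟩, ht, hlen'⟩
          · have h9 : a + b - b = a := by omega
            rw [h9]
      · rintro ⟨⟨s, b⟩, hp, t, ⟨⟨hpos, hsum⟩, harndt, hlen⟩, rfl⟩
        rw [hmemP] at hp
        obtain ⟨hsn, hb, hbs⟩ := hp
        dsimp only at hsn hb hbs ⊢
        refine ⟨⟨?_, ?_⟩, ?_, ?_⟩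
        · intro x hx
          simp only [List.mem_cons] at hx
          rcases hx with rfl | rfl | hx
          · omega
          · exact hb
          · exact hpos x hx
        · simp only [List.sum_cons]
          omega
        · exact isArndt_cons_cons.mpr ⟨by omega, harndt⟩
        · simp only [List.length_cons, hlen]
    have hSeq : S n (m+1+1) = ↑(P.biUnion T) := by
      ext l
      rw [hmem l, Finset.mem_coe, Finset.mem_biUnion]
      constructor
      · rintro ⟨p, hp, t, ht, rfl⟩
        exact ⟨p, hp, Finset.mem_image.mpr ⟨t, (IH (n - p.1)).1.mem_toFinset.mpr ht, rfl⟩⟩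
      · rintro ⟨p, hp, hl⟩
        obtain ⟨t, ht, rfl⟩ := Finset.mem_image.mp hl
        exact ⟨p, hp, t, (IH (n - p.1)).1.mem_toFinset.mp ht, rfl⟩
    refine ⟨by rw [hSeq]; exact (P.biUnion T).finite_toSet, ?_⟩
    rw [hSeq, Set.ncard_coe_finset]
    have hdisj : ∀ p ∈ P, ∀ q ∈ P, p ≠ q → Disjoint (T p) (T q) := by
      intro p hp q hq hpq
      rw [Finset.disjoint_left]
      intro l hlp hlq
      obtain ⟨t, ht, rfl⟩ := Finset.mem_image.mp hlp
      obtain ⟨t', ht', heq⟩ := Finset.mem_image.mp hlq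
      rw [hmemP] at hp hq
      simp only [List.cons.injEq] at heq
      obtain ⟨h1, h2, _⟩ := heq
      exact hpq (Prod.ext (by omega) (by omega))
    rw [Finset.card_biUnion hdisj]
    have hcard : ∀ p ∈ P, (T p).card = (S (n - p.1) m).ncard := by
      intro p _
      rw [hT]
      rw [Finset.card_image_of_injective _ (fun t1 t2 h => by simpa using h)]
      exact (Set.ncard_eq_toFinset_card _ (IH (n - p.1)).1).symm
    rw [Finset.sum_congr rfl hcard]
    push_cast
    rw [Finset.sum_congr rfl (fun p _ => (IH (n - p.1)).2)]
    rw [← Fstep n m]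
    rw [hP, Finset.sum_filter, Finset.sum_product]
    apply Finset.sum_congr rfl
    intro s hs
    show (∑ b ∈ range (n+1), if 0 < b ∧ 2 * b + 1 ≤ s then F (n - s) m else 0) = _
    rw [← Finset.sum_filter, Finset.sum_const]
    have hfil : (range (n+1)).filter (fun b => 0 < b ∧ 2 * b + 1 ≤ s) = Finset.Icc 1 ((s-1)/2) := by
      ext b
      simp only [Finset.mem_filter, mem_range, Finset.mem_Icc]
      rw [mem_range] at hs
      omega
    rw [hfil, Nat.card_Icc]
    have h10 : (s - 1) / 2 + 1 - 1 = (s - 1) / 2 := by omega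
    rw [h10, nsmul_eq_mul]

end ArndtAux

lemma genChoose_natCast (a b : ℕ) : genChoose (a : ℤ) (b : ℤ) = (a.choose b : ℤ) := by
  unfold genChoose
  rw [if_pos (Int.natCast_nonneg b), Int.toNat_natCast]
  have h1 : (∏ i ∈ Finset.range b, ((a:ℤ) - (i:ℤ))) = (a.descFactorial b : ℤ) := by
    rcases le_or_gt b a with h | h
    · rw [Nat.descFactorial_eq_prod_range, Nat.cast_prod]
      apply Finset.prod_congr rfl
      intro i hi
      rw [Finset.mem_range] at hi
      rw [Nat.cast_sub (by omega)]
    · rw [Nat.descFactorial_eq_zero_iff_lt.mpr h, Nat.cast_zero]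
      apply Finset.prod_eq_zero (Finset.mem_range.mpr h)
      simp
  rw [h1, Nat.descFactorial_eq_factorial_mul_choose, Nat.cast_mul,
    Int.mul_ediv_cancel_left _ (by exact_mod_cast b.factorial_ne_zero)]

lemma genChoose_zero' (a : ℤ) : genChoose a 0 = 1 := by
  unfold genChoose
  norm_num


/-- for all `n, m ≥ 0`,
`a(n,m) = Σ_{ℓ=0}^{n-m-⌊m/2⌋} C(m+ℓ-1, ℓ) C(n-m-ℓ-1, n-m-⌊m/2⌋-ℓ) (-1)^{n-m-⌊m/2⌋-ℓ}`,
the sum being empty when `n - m - ⌊m/2⌋ < 0` (the `ℕ`-valued range below is then empty). -/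
theorem arndtParts_formula (n m : ℕ) :
    (arndtParts n m : ℤ) =
      ∑ ℓ ∈ Finset.range (n + 1 - m - m / 2),
        genChoose ((m : ℤ) + (ℓ : ℤ) - 1) (ℓ : ℤ) *
          genChoose ((n : ℤ) - (m : ℤ) - (ℓ : ℤ) - 1)
            ((n : ℤ) - (m : ℤ) - ((m / 2 : ℕ) : ℤ) - (ℓ : ℤ)) *
          (-1) ^ (n - m - m / 2 - ℓ) := by
  have hmain := ArndtAux.main m n
  have harndt : (arndtParts n m : ℤ) = ArndtAux.F n m := hmain.2
  rw [harndt]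
  set k := m / 2 with hk
  have hkm : k ≤ m := Nat.div_le_self m 2
  by_cases hn : m + k ≤ n
  · set N := n - m - k with hN
    have hrange : n + 1 - m - k = N + 1 := by omega
    have hF : ArndtAux.F n m
        = PowerSeries.coeff N (ArndtAux.O ^ (m - k) * ArndtAux.E ^ k) := by
      rw [ArndtAux.F, if_pos hn]
    rw [hF, hrange, ← ArndtAux.key hkm]
    rw [PowerSeries.coeff_mul, Finset.Nat.sum_antidiagonal_eq_sum_range_succ_mk]
    apply Finset.sum_congr rfl
    intro ℓ hℓ
    rw [Finset.mem_range] at hℓ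
    rw [ArndtAux.coeff_O_pow, ArndtAux.coeff_B_pow]
    have hg1 : genChoose ((m:ℤ) + (ℓ:ℤ) - 1) (ℓ:ℤ) = ((m + ℓ - 1).choose ℓ : ℤ) := by
      rcases Nat.eq_zero_or_pos (m + ℓ) with h | h
      · have hm : m = 0 := by omega
        have hl : ℓ = 0 := by omega
        subst hm; subst hl
        norm_num [genChoose_zero']
      · have harg : ((m:ℤ) + (ℓ:ℤ) - 1) = ((m + ℓ - 1 : ℕ) : ℤ) := by omega
        rw [harg]
        exact genChoose_natCast _ _
    have hg2 : genChoose ((n:ℤ) - m - (ℓ:ℤ) - 1) ((n:ℤ) - m - (k:ℤ) - (ℓ:ℤ))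
        = ((k + (N - ℓ) - 1).choose (N - ℓ) : ℤ) := by
      have harg2 : (n:ℤ) - m - (k:ℤ) - (ℓ:ℤ) = ((N - ℓ : ℕ) : ℤ) := by omega
      rcases Nat.eq_zero_or_pos (k + (N - ℓ)) with h | h
      · have hk0 : k = 0 := by omega
        have hlN : N - ℓ = 0 := by omega
        rw [harg2, hlN]
        norm_num [genChoose_zero']
      · have harg1 : (n:ℤ) - m - (ℓ:ℤ) - 1 = ((k + (N - ℓ) - 1 : ℕ) : ℤ) := by omega
        rw [harg2, harg1]
        exact genChoose_natCast _ _
    have hg3 : n - m - k - ℓ = N - ℓ := by omega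
    rw [hg1, hg2, hg3]
    ring
  · rw [ArndtAux.F, if_neg (by omega)]
    have h0 : n + 1 - m - k = 0 := by omega
    rw [h0, Finset.range_zero, Finset.sum_empty]
end

section
/- For all integers n, m ≥ 0, the following linear recurrence holds in ℤ: (m − n − 2 + ⌊m/2⌋) · a(n+2, m) + (m − ⌊m/2⌋) · a(n+1, m) + n · a(n, m) = 0. -/
/-- head-recursive version of Arndt condition, for reversed lists -/
def ArndtP : List ℕ → Prop
  | [] => True
  | a :: t => ArndtP t ∧ (t.length % 2 = 1 → a < t.headI)

lemma isArndt_append (u : List ℕ) (a : ℕ) :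
    IsArndt (u ++ [a]) ↔ IsArndt u ∧ (u.length % 2 = 1 → a < u.getD (u.length - 1) 0) := by
  constructor
  · intro h
    refine ⟨fun i hi => ?_, fun hodd => ?_⟩
    · have h2i : 2 * i < u.length := by omega
      have := h i (by simp; omega)
      rwa [List.getD_append _ _ _ _ hi, List.getD_append _ _ _ _ h2i] at this
    · obtain ⟨i, hi⟩ : ∃ i, u.length = 2 * i + 1 := ⟨u.length / 2, by omega⟩
      have := h i (by simp; omega)
      rw [List.getD_append_right _ _ _ _ (by omega)] at this
      rw [List.getD_append _ _ _ _ (by omega)] at this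
      simp only [hi, Nat.sub_self] at this ⊢
      simpa using this
  · rintro ⟨h1, h2⟩ i hi
    simp only [List.length_append, List.length_singleton] at hi
    rcases lt_or_ge (2 * i + 1) u.length with h | h
    · rw [List.getD_append _ _ _ _ h, List.getD_append _ _ _ _ (by omega)]
      exact h1 i h
    · have he : u.length = 2 * i + 1 := by omega
      rw [List.getD_append_right _ _ _ _ (by omega), List.getD_append _ _ _ _ (by omega)]
      have := h2 (by omega)
      simp only [he, Nat.sub_self]
      simpa [he] using this

lemma rev_getD_last (t : List ℕ) (ht : t ≠ []) : t.reverse.getD (t.length - 1) 0 = t.headI := by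
  have hl : 0 < t.length := List.length_pos_iff.2 ht
  rw [List.getD_eq_getElem _ _ (by simp; omega), List.getElem_reverse]
  simp only [Nat.sub_self]
  cases t with
  | nil => simp at ht
  | cons a t => simp

lemma arndtP_iff (l : List ℕ) : ArndtP l ↔ IsArndt l.reverse := by
  induction l with
  | nil => simp [ArndtP, IsArndt]
  | cons a t ih =>
    simp only [ArndtP, List.reverse_cons, isArndt_append, ih, List.length_reverse]
    have key : t.length % 2 = 1 → t.reverse.getD (t.length - 1) 0 = t.headI := by
      intro hodd
      exact rev_getD_last t (by rintro rfl; simp at hodd)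
    constructor
    · rintro ⟨h1, h2⟩
      exact ⟨h1, fun hodd => (key hodd) ▸ h2 hodd⟩
    · rintro ⟨h1, h2⟩
      exact ⟨h1, fun hodd => (key hodd) ▸ h2 hodd⟩

/-- reversed-list version of the set of Arndt compositions with m parts -/
def S' (n m : ℕ) : Set (List ℕ) :=
  {l | (∀ x ∈ l, 0 < x) ∧ l.sum = n ∧ ArndtP l ∧ l.length = m}

lemma arndtParts_eq_S' (n m : ℕ) : arndtParts n m = (S' n m).ncard := by
  have himg : List.reverse '' {l : List ℕ | IsComposition n l ∧ IsArndt l ∧ l.length = m}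
      = S' n m := by
    ext l
    constructor
    · rintro ⟨l', ⟨⟨h1, h2⟩, h3, h4⟩, rfl⟩
      refine ⟨by simpa using h1, by rw [List.sum_reverse]; exact h2, ?_, by simpa using h4⟩
      rw [arndtP_iff]
      simpa using h3
    · rintro ⟨h1, h2, h3, h4⟩
      refine ⟨l.reverse, ⟨⟨by simpa using h1, by rw [List.sum_reverse]; exact h2⟩, ?_, by simpa using h4⟩,
        by simp⟩
      rw [arndtP_iff] at h3
      exact h3
  rw [arndtParts, ← himg, Set.ncard_image_of_injective _ List.reverse_injective]

lemma S'_finite (n m : ℕ) : (S' n m).Finite := by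
  apply Set.Finite.subset (Set.finite_range (Composition.blocks (n := n)))
  rintro l ⟨h1, h2, -, -⟩
  exact ⟨⟨l, fun {i} hi => h1 i hi, h2⟩, rfl⟩

lemma S'_zero_right (n : ℕ) : (S' n 0).ncard = if n = 0 then 1 else 0 := by
  split_ifs with h
  · subst h
    have : S' 0 0 = {([] : List ℕ)} := by
      ext l
      constructor
      · rintro ⟨-, -, -, h4⟩
        simpa using List.length_eq_zero_iff.1 h4
      · rintro rfl
        exact ⟨by simp, by simp, trivial, by simp⟩
    rw [this, Set.ncard_singleton]
  · have : S' n 0 = ∅ := by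
      ext l
      simp only [Set.mem_empty_iff_false, iff_false]
      rintro ⟨-, h2, -, h4⟩
      rw [List.length_eq_zero_iff.1 h4] at h2
      simp at h2
      omega
    simp [this]

lemma S'_zero_left (m : ℕ) : (S' 0 (m + 1)).ncard = 0 := by
  have : S' 0 (m + 1) = ∅ := by
    ext l
    simp only [Set.mem_empty_iff_false, iff_false]
    rintro ⟨h1, h2, -, h4⟩
    have : l.length ≤ l.sum := List.length_le_sum_of_one_le _ fun i hi => h1 i hi
    omega
  simp [this]

lemma S'_one (m : ℕ) (hm : 2 ≤ m) : (S' 1 m).ncard = 0 := by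
  have : S' 1 m = ∅ := by
    ext l
    simp only [Set.mem_empty_iff_false, iff_false]
    rintro ⟨h1, h2, -, h4⟩
    have : l.length ≤ l.sum := List.length_le_sum_of_one_le _ fun i hi => h1 i hi
    omega
  simp [this]

def incHead : List ℕ → List ℕ
  | [] => []
  | a :: t => (a + 1) :: t

lemma incHead_inj : Function.Injective incHead := by
  intro l1 l2 h
  match l1, l2 with
  | [], [] => rfl
  | [], b :: s => simp [incHead] at h
  | a :: t, [] => simp [incHead] at h
  | a :: t, b :: s =>
    simp only [incHead, List.cons.injEq] at h ⊢
    exact ⟨by omega, h.2⟩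

lemma shape1 (l : List ℕ) (h : 1 ≤ l.length) : ∃ a t, l = a :: t := by
  match l with
  | a :: t => exact ⟨a, t, rfl⟩
  | [] => simp at h

lemma shape2 (l : List ℕ) (h : 2 ≤ l.length) : ∃ a b t, l = a :: b :: t := by
  match l with
  | a :: b :: t => exact ⟨a, b, t, rfl⟩
  | [] => simp at h
  | [a] => simp at h

lemma S'_odd (n m : ℕ) (hm : m % 2 = 1) :
    (S' (n + 1) m).ncard = (S' n m).ncard + (S' n (m - 1)).ncard := by
  have key : S' (n + 1) m = incHead '' (S' n m) ∪ (fun l => 1 :: l) '' (S' n (m - 1)) := by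
    ext l
    constructor
    · rintro ⟨h1, h2, h3, h4⟩
      obtain ⟨a, t, rfl⟩ := shape1 l (by omega)
      have ha : 0 < a := h1 a (by simp)
      simp only [ArndtP] at h3
      simp only [List.sum_cons] at h2
      simp only [List.length_cons] at h4
      rcases Nat.lt_or_ge a 2 with ha2 | ha2
      · right
        have : a = 1 := by omega
        subst this
        exact ⟨t, ⟨fun x hx => h1 x (List.mem_cons_of_mem _ hx), by omega, h3.1, by omega⟩, rfl⟩
      · left
        refine ⟨(a - 1) :: t, ⟨?_, ?_, ⟨h3.1, fun hodd => by omega⟩, by simp; omega⟩, ?_⟩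
        · intro x hx
          rcases List.mem_cons.1 hx with rfl | hx
          · omega
          · exact h1 x (List.mem_cons_of_mem _ hx)
        · simp; omega
        · simp only [incHead]
          congr 1
          omega
    · rintro (⟨l', ⟨h1, h2, h3, h4⟩, rfl⟩ | ⟨l', ⟨h1, h2, h3, h4⟩, rfl⟩)
      · obtain ⟨a, t, rfl⟩ := shape1 l' (by omega)
        simp only [ArndtP] at h3
        simp only [List.sum_cons] at h2
        simp only [List.length_cons] at h4
        refine ⟨?_, ?_, ⟨h3.1, fun hodd => by omega⟩, by simp [incHead]; omega⟩
        · rintro x hx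
          simp only [incHead, List.mem_cons] at hx
          rcases hx with rfl | hx
          · omega
          · exact h1 x (List.mem_cons_of_mem _ hx)
        · simp [incHead]; omega
      · refine ⟨?_, by simp; omega, ⟨h3, fun hodd => by omega⟩, by simp; omega⟩
        intro x hx
        rcases List.mem_cons.1 hx with rfl | hx
        · omega
        · exact h1 x hx
  rw [key, Set.ncard_union_eq ?disj ((S'_finite n m).image _) ((S'_finite n (m-1)).image _),
    Set.ncard_image_of_injective _ incHead_inj,
    Set.ncard_image_of_injective _ (fun a b h => by simpa using h)]
  case disj =>
    rw [Set.disjoint_left]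
    rintro l ⟨l', ⟨h1, -, -, h4⟩, rfl⟩ ⟨l'', -, heq⟩
    obtain ⟨a, t, rfl⟩ := shape1 l' (by omega)
    have := h1 a (by simp)
    simp only [incHead] at heq
    have : a + 1 = 1 := by
      have := congrArg (List.headI) heq
      simpa using this
    omega

def inc2 : List ℕ → List ℕ
  | a :: b :: t => (a + 1) :: (b + 1) :: t
  | l => l

lemma S'_even (n m : ℕ) (hm : m % 2 = 0) (hm0 : m ≠ 0) :
    (S' (n + 2) m).ncard = (S' n m).ncard + (S' n (m - 1)).ncard := by
  have hm2 : 2 ≤ m := by omega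
  have key : S' (n + 2) m = inc2 '' (S' n m) ∪ (fun l => 1 :: incHead l) '' (S' n (m - 1)) := by
    ext l
    constructor
    · rintro ⟨h1, h2, h3, h4⟩
      obtain ⟨a, b, t, rfl⟩ := shape2 l (by omega)
      have ha : 0 < a := h1 a (by simp)
      have hb : 0 < b := h1 b (by simp)
      simp only [ArndtP, List.length_cons] at h3
      simp only [List.sum_cons] at h2
      simp only [List.length_cons] at h4
      have hab : a < b := h3.2 (by omega)
      rcases Nat.lt_or_ge a 2 with ha2 | ha2
      · right
        have : a = 1 := by omega
        subst this
        refine ⟨(b - 1) :: t, ⟨?_, by simp; omega, ⟨h3.1.1, fun hodd => by omega⟩,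
          by simp; omega⟩, ?_⟩
        · intro x hx
          rcases List.mem_cons.1 hx with rfl | hx
          · omega
          · exact h1 x (List.mem_cons_of_mem _ (List.mem_cons_of_mem _ hx))
        · simp only [incHead]
          congr 2
          omega
      · left
        refine ⟨(a - 1) :: (b - 1) :: t, ⟨?_, by simp; omega,
          ⟨⟨h3.1.1, fun hodd => by omega⟩, fun _ => by simp; omega⟩, by simp; omega⟩, ?_⟩
        · intro x hx
          rcases List.mem_cons.1 hx with rfl | hx
          · omega
          · rcases List.mem_cons.1 hx with rfl | hx
            · omega
            · exact h1 x (List.mem_cons_of_mem _ (List.mem_cons_of_mem _ hx))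
        · simp only [inc2]
          congr 2
          · omega
          · omega
    · rintro (⟨l', ⟨h1, h2, h3, h4⟩, rfl⟩ | ⟨l', ⟨h1, h2, h3, h4⟩, rfl⟩)
      · obtain ⟨a, b, t, rfl⟩ := shape2 l' (by omega)
        simp only [ArndtP, List.length_cons] at h3
        simp only [List.sum_cons] at h2
        simp only [List.length_cons] at h4
        have hab : a < b := h3.2 (by omega)
        refine ⟨?_, by simp [inc2]; omega,
          ⟨⟨h3.1.1, fun hodd => by omega⟩, fun _ => by simp; omega⟩, by simp [inc2]; omega⟩
        intro x hx
        simp only [inc2, List.mem_cons] at hx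
        rcases hx with rfl | rfl | hx
        · omega
        · omega
        · exact h1 x (List.mem_cons_of_mem _ (List.mem_cons_of_mem _ hx))
      · obtain ⟨c, t, rfl⟩ := shape1 l' (by omega)
        have hc : 0 < c := h1 c (by simp)
        simp only [ArndtP] at h3
        simp only [List.sum_cons] at h2
        simp only [List.length_cons] at h4
        refine ⟨?_, by simp [incHead]; omega,
          ⟨⟨h3.1, fun hodd => by omega⟩, fun _ => by simp [incHead]; omega⟩,
          by simp [incHead]; omega⟩
        intro x hx
        simp only [incHead, List.mem_cons] at hx
        rcases hx with rfl | rfl | hx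
        · omega
        · omega
        · exact h1 x (List.mem_cons_of_mem _ hx)
  rw [key, Set.ncard_union_eq ?disj ((S'_finite n m).image _) ((S'_finite n (m-1)).image _),
    Set.ncard_image_of_injOn ?inj,
    Set.ncard_image_of_injective _ (fun a b h => incHead_inj (by simpa using h))]
  case disj =>
    rw [Set.disjoint_left]
    rintro l ⟨l', ⟨h1, -, -, h4⟩, rfl⟩ ⟨l'', -, heq⟩
    obtain ⟨a, b, t, rfl⟩ := shape2 l' (by omega)
    have := h1 a (by simp)
    simp only [inc2] at heq
    have : a + 1 = 1 := by
      have := congrArg (List.headI) heq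
      simpa using this
    omega
  case inj =>
    rintro l1 ⟨-, -, -, h4⟩ l2 ⟨-, -, -, h4'⟩ heq
    obtain ⟨a, b, t, rfl⟩ := shape2 l1 (by omega)
    obtain ⟨a', b', t', rfl⟩ := shape2 l2 (by omega)
    simp only [inc2, List.cons.injEq] at heq ⊢
    refine ⟨by omega, by omega, heq.2.2⟩

def f : ℕ → ℕ → ℕ
  | n, 0 => if n = 0 then 1 else 0
  | 0, _ + 1 => 0
  | 1, m + 1 => if m % 2 = 0 then f 0 (m + 1) + f 0 m else 0
  | n + 2, m + 1 =>
      if m % 2 = 0 then f (n + 1) (m + 1) + f (n + 1) m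
      else f n (m + 1) + f n m
  termination_by n m => n

lemma f_zero_right (n : ℕ) : f n 0 = if n = 0 then 1 else 0 := by
  cases n with
  | zero => simp [f]
  | succ k => cases k <;> simp [f]

lemma f_zero_left (m : ℕ) : f 0 (m + 1) = 0 := by simp [f]

lemma f_odd (m : ℕ) (hm : m % 2 = 1) (n : ℕ) : f (n + 1) m = f n m + f n (m - 1) := by
  obtain ⟨m', rfl⟩ : ∃ m', m = m' + 1 := ⟨m - 1, by omega⟩
  have h : m' % 2 = 0 := by omega
  cases n with
  | zero => simp [f, h]
  | succ k => simp [f, h]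

lemma f_even (m : ℕ) (hm : m % 2 = 0) (hm0 : m ≠ 0) (n : ℕ) :
    f (n + 2) m = f n m + f n (m - 1) := by
  obtain ⟨m', rfl⟩ : ∃ m', m = m' + 1 := ⟨m - 1, by omega⟩
  have h : ¬ (m' % 2 = 0) := by omega
  simp [f, h]

lemma f_one (m : ℕ) (hm : m % 2 = 0) (hm0 : m ≠ 0) : f 1 m = 0 := by
  obtain ⟨m', rfl⟩ : ∃ m', m = m' + 1 := ⟨m - 1, by omega⟩
  have h : ¬ (m' % 2 = 0) := by omega
  simp [f, h]

lemma S'_eq_f (n : ℕ) : ∀ m, (S' n m).ncard = f n m := by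
  induction n using Nat.strong_induction_on with
  | _ n ih =>
    intro m
    match m with
    | 0 => rw [S'_zero_right, f_zero_right]
    | m + 1 =>
      match n with
      | 0 => rw [S'_zero_left, f_zero_left]
      | n + 1 =>
        rcases Nat.even_or_odd (m + 1) with he | ho
        · have hm : (m + 1) % 2 = 0 := Nat.even_iff.1 he
          match n with
          | 0 => rw [S'_one _ (by omega), f_one _ hm (by omega)]
          | n + 1 =>
            rw [show n + 1 + 1 = n + 2 from rfl, S'_even n (m + 1) hm (by omega),
              f_even (m + 1) hm (by omega), ih n (by omega), ih n (by omega)]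
        · have hm : (m + 1) % 2 = 1 := Nat.odd_iff.1 ho
          rw [S'_odd n (m + 1) hm, f_odd (m + 1) hm, ih n (by omega), ih n (by omega)]

lemma arndtParts_eq_f (n m : ℕ) : arndtParts n m = f n m := by
  rw [arndtParts_eq_S', S'_eq_f]

lemma f_one' (m : ℕ) : f 1 (m + 1) = if m = 0 then 1 else 0 := by
  rcases Nat.even_or_odd m with he | ho
  · have h : m % 2 = 0 := Nat.even_iff.1 he
    rcases m with _ | m'
    · simp [f]
    · simp [f, h, f_zero_left]
  · have h1 : m % 2 = 1 := Nat.odd_iff.1 ho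
    have h : ¬ (m % 2 = 0) := by omega
    have h0 : m ≠ 0 := by omega
    simp [f, h, h0]

lemma f_rec : ∀ m n : ℕ,
    ((m : ℤ) - (n : ℤ) - 2 + ((m / 2 : ℕ) : ℤ)) * (f (n + 2) m : ℤ) +
      ((m : ℤ) - ((m / 2 : ℕ) : ℤ)) * (f (n + 1) m : ℤ) + (n : ℤ) * (f n m : ℤ) = 0 := by
  intro m
  induction m using Nat.strong_induction_on with
  | _ m ihm =>
    rcases Nat.even_or_odd m with he | ho
    · -- m even
      have he' : m % 2 = 0 := Nat.even_iff.1 he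
      obtain ⟨j, rfl⟩ : ∃ j, m = 2 * j := ⟨m / 2, by omega⟩
      clear he
      rcases j with _ | k
      · -- m = 0
        intro n
        rcases n with _ | r <;> simp [f_zero_right]
      · -- m = 2k+2
        have hm : 2 * (k + 1) = 2 * k + 2 := by ring
        rw [hm]
        have hdiv : (2 * k + 2) / 2 = k + 1 := by omega
        have hpar : (2 * k + 2) % 2 = 0 := by omega
        have hE : ∀ r : ℕ, (f (r + 2) (2 * k + 2) : ℤ)
            = (f r (2 * k + 2) : ℤ) + (f r (2 * k + 1) : ℤ) := by
          intro r
          have := f_even (2 * k + 2) hpar (by omega) r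
          rw [show 2 * k + 2 - 1 = 2 * k + 1 from by omega] at this
          exact_mod_cast this
        have hIH : ∀ r : ℕ, ((2 * k + 1 : ℤ) - (r : ℤ) - 2 + (k : ℤ)) * (f (r + 2) (2 * k + 1) : ℤ) +
            ((2 * k + 1 : ℤ) - (k : ℤ)) * (f (r + 1) (2 * k + 1) : ℤ)
              + (r : ℤ) * (f r (2 * k + 1) : ℤ) = 0 := by
          intro r
          have := ihm (2 * k + 1) (by omega) r
          rw [show (2 * k + 1) / 2 = k from by omega] at this
          push_cast at this ⊢
          linarith [this]
        intro n
        induction n using Nat.strong_induction_on with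
        | _ n ihn =>
          match n with
          | 0 =>
            have h1 : f 1 (2 * k + 2) = 0 := f_one (2 * k + 2) hpar (by omega)
            have h2 : (f 2 (2 * k + 2) : ℤ) = 0 := by
              have := hE 0
              rw [f_zero_left, show (2 * k + 1) = (2 * k) + 1 from rfl, f_zero_left] at this
              simpa using this
            rw [hdiv, h1, h2]
            push_cast
            ring
          | 1 =>
            have h1 : f 1 (2 * k + 2) = 0 := f_one (2 * k + 2) hpar (by omega)
            have h2 : (f 2 (2 * k + 2) : ℤ) = 0 := by
              have := hE 0
              rw [f_zero_left, show (2 * k + 1) = (2 * k) + 1 from rfl, f_zero_left] at this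
              simpa using this
            have h3 : (f 3 (2 * k + 2) : ℤ) = (f 1 (2 * k + 1) : ℤ) := by
              have := hE 1
              rw [h1] at this
              simpa using this
            have h4 : f 1 (2 * k + 1) = if 2 * k = 0 then 1 else 0 := f_one' (2 * k)
            rw [hdiv, h1, h2, h3, h4]
            rcases k with _ | k'
            · norm_num
            · simp only [if_neg (by omega : ¬ (2 * (k' + 1) = 0))]
              push_cast
              ring
          | (r + 2) =>
            have hS := ihn r (by omega)
            have hI := hIH r
            have e2 := hE (r + 2)
            have e1 := hE (r + 1)
            have e0 := hE r
            rw [hdiv] at hS ⊢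
            push_cast at hS hI e2 e1 e0 ⊢
            linear_combination hS + hI + (3 * (k : ℤ) - r - 1) * e2 + ((k : ℤ) + 1) * e1
              + (r : ℤ) * e0
    · -- m odd, m = 2j+1
      obtain ⟨j, rfl⟩ := ho
      have hdiv : (2 * j + 1) / 2 = j := by omega
      have hpar : (2 * j + 1) % 2 = 1 := by omega
      have hE : ∀ r : ℕ, (f (r + 1) (2 * j + 1) : ℤ)
          = (f r (2 * j + 1) : ℤ) + (f r (2 * j) : ℤ) := by
        intro r
        have := f_odd (2 * j + 1) hpar r
        rw [show 2 * j + 1 - 1 = 2 * j from by omega] at this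
        exact_mod_cast this
      have hIH : ∀ r : ℕ, ((2 * j : ℤ) - (r : ℤ) - 2 + (j : ℤ)) * (f (r + 2) (2 * j) : ℤ) +
          ((2 * j : ℤ) - (j : ℤ)) * (f (r + 1) (2 * j) : ℤ)
            + (r : ℤ) * (f r (2 * j) : ℤ) = 0 := by
        intro r
        have := ihm (2 * j) (by omega) r
        rw [show (2 * j) / 2 = j from by omega] at this
        push_cast at this ⊢
        linarith [this]
      intro n
      induction n with
      | zero =>
        have e1 := hE 1
        have e0 := hE 0
        have g1 : (f 1 (2 * j) : ℤ) = 0 := by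
          rcases j with _ | j'
          · simp [f_zero_right]
          · exact_mod_cast f_one (2 * (j' + 1)) (by omega) (by omega)
        have g0 : f 1 (2 * j + 1) = if 2 * j = 0 then 1 else 0 := f_one' (2 * j)
        rw [hdiv]
        rcases j with _ | j'
        · simp only [if_pos] at g0
          rw [show 2 * 0 + 1 = 1 from rfl] at e1 ⊢
          rw [show (2 * 0 : ℕ) = 0 from rfl] at g1 e1
          push_cast [g0] at e1 g1 ⊢
          linear_combination -e1 - g1
        · simp only [if_neg (by omega : ¬ (2 * (j' + 1) = 0))] at g0
          push_cast [g0] at e1 g1 ⊢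
          linear_combination (3 * ((j' : ℤ) + 1) - 1) * e1 + (3 * ((j' : ℤ) + 1) - 1) * g1
      | succ r ihn =>
        have hS := ihn
        have hI := hIH r
        have e2 := hE (r + 2)
        have e1 := hE (r + 1)
        have e0 := hE r
        rw [hdiv] at hS ⊢
        push_cast at hS hI e2 e1 e0 ⊢
        linear_combination hS + hI + (3 * (j : ℤ) - r - 2) * e2 + (j : ℤ) * e1 + (r : ℤ) * e0

/-- for all `n, m ≥ 0`,
`(m - n - 2 + ⌊m/2⌋)·a(n+2,m) + (m - ⌊m/2⌋)·a(n+1,m) + n·a(n,m) = 0` in `ℤ`. -/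
theorem arndtParts_WZ_recurrence (n m : ℕ) :
    ((m : ℤ) - (n : ℤ) - 2 + ((m / 2 : ℕ) : ℤ)) * (arndtParts (n + 2) m : ℤ) +
        ((m : ℤ) - ((m / 2 : ℕ) : ℤ)) * (arndtParts (n + 1) m : ℤ) +
        (n : ℤ) * (arndtParts n m : ℤ) = 0 := by
  rw [arndtParts_eq_f, arndtParts_eq_f, arndtParts_eq_f]
  exact f_rec m n
end

section
/- For every integer n ≥ 1, F_n = Σ_{m=0}^{n} Σ_{ℓ=0}^{n − m − ⌊m/2⌋} C(m + ℓ − 1, ℓ) · C(n − m − ℓ − 1, n − m − ⌊m/2⌋ − ℓ) · (−1)^{n − m − ⌊m/2⌋ − ℓ}, where the inner sum is empty when n − m − ⌊m/2⌋ < 0, and C(a, b) denotes the generalized binomial coefficient a(a−1)⋯(a−b+1)/b! for an integer a (possibly negative) and a natural number b. -/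
lemma prod_range_int_sub (a j : ℕ) :
    (∏ i ∈ Finset.range j, ((a : ℤ) - i)) = (a.descFactorial j : ℤ) := by
  induction j with
  | zero => simp
  | succ j ih =>
    rw [Finset.prod_range_succ, ih, Nat.descFactorial_succ]
    by_cases h : j ≤ a
    · push_cast [h]; ring
    · have h0 : a.descFactorial j = 0 := Nat.descFactorial_eq_zero_iff_lt.mpr (by omega)
      simp [h0]

lemma genChoose_eq (p j : ℕ) :
    genChoose ((p : ℤ) + j - 1) (j : ℤ) = ((p + j - 1).choose j : ℤ) := by
  rcases Nat.eq_zero_or_pos (p + j) with h | h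
  · obtain ⟨rfl, rfl⟩ : p = 0 ∧ j = 0 := by omega
    simp [genChoose]
  · have hcast : (p : ℤ) + j - 1 = ((p + j - 1 : ℕ) : ℤ) := by omega
    rw [hcast]
    unfold genChoose
    rw [if_pos (by positivity), Int.toNat_natCast, prod_range_int_sub,
      Nat.choose_eq_descFactorial_div_factorial, Int.natCast_div]


open PowerSeries Finset

noncomputable def psU : (PowerSeries ℤ)ˣ := PowerSeries.invOneSubPow ℤ 1
noncomputable def psV : (PowerSeries ℤ)ˣ :=
  Units.map (PowerSeries.rescale (-1 : ℤ)).toMonoidHom psU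

lemma psU_pow (m : ℕ) : psU ^ m = PowerSeries.invOneSubPow ℤ m := by
  rw [psU, invOneSubPow_eq_inv_one_sub_pow (S := ℤ) (d := m),
    invOneSubPow_eq_inv_one_sub_pow (S := ℤ) (d := 1), pow_one]

lemma coeff_psU (m ℓ : ℕ) :
    PowerSeries.coeff ℓ (psU ^ m).val = ((m + ℓ - 1).choose ℓ : ℤ) := by
  cases m with
  | zero =>
    rw [pow_zero, Units.val_one, coeff_one]
    rcases Nat.eq_zero_or_pos ℓ with rfl | h
    · simp
    · have h0 : (0 + ℓ - 1).choose ℓ = 0 := Nat.choose_eq_zero_of_lt (by omega)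
      rw [h0, if_neg (by omega)]
      simp
  | succ d =>
    rw [psU_pow, invOneSubPow_val_succ_eq_mk_add_choose, coeff_mk]
    have h1 : d + 1 + ℓ - 1 = d + ℓ := by omega
    have h2 : (d + ℓ).choose d = (d + ℓ).choose ℓ := by
      rw [← Nat.choose_symm (by omega : ℓ ≤ d + ℓ)]
      congr 1
      omega
    rw [h1, ← h2]

lemma psV_pow_val (q : ℕ) :
    (↑(psV ^ q) : PowerSeries ℤ) = PowerSeries.rescale (-1 : ℤ) ↑(psU ^ q) := by
  rw [psV, ← map_pow, Units.coe_map]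
  rfl

lemma coeff_psV (q j : ℕ) :
    PowerSeries.coeff j ↑(psV ^ q) = (-1 : ℤ) ^ j * ((q + j - 1).choose j : ℤ) := by
  rw [psV_pow_val, coeff_rescale, coeff_psU]

lemma psU_cancel (m : ℕ) : ((psU ^ m).val : PowerSeries ℤ) * (1 - X) ^ m = 1 := by
  rw [psU_pow]
  have := (invOneSubPow ℤ m).val_inv
  rwa [invOneSubPow_inv_eq_one_sub_pow] at this

lemma rescale_one_sub : PowerSeries.rescale (-1 : ℤ) (1 - X) = 1 + X := by
  rw [map_sub, map_one, rescale_X, map_neg, map_one]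
  ring

lemma psV_cancel (q : ℕ) : (↑(psV ^ q) : PowerSeries ℤ) * (1 + X) ^ q = 1 := by
  rw [psV_pow_val, ← rescale_one_sub, ← map_pow, ← map_mul, psU_cancel, map_one]

noncomputable def psF (m : ℕ) : PowerSeries ℤ :=
  X ^ (m + m / 2) * (psU ^ m).val * (psV ^ (m / 2)).val

lemma one_sub_X_ne : (1 - X : PowerSeries ℤ) ≠ 0 := fun h => by
  simpa using congrArg (PowerSeries.constantCoeff (R := ℤ)) h

lemma one_add_X_ne : (1 + X : PowerSeries ℤ) ≠ 0 := fun h => by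
  simpa using congrArg (PowerSeries.constantCoeff (R := ℤ)) h

lemma lemA (K : ℕ) :
    (1 - X - X ^ 2 : PowerSeries ℤ) *
      ∑ m ∈ range (2 * K + 2),
        X ^ (m + m / 2) * (1 - X) ^ (2 * K + 1 - m) * (1 + X) ^ (K - m / 2)
    = (1 - X ^ 2) * (1 - X) ^ (2 * K + 1) * (1 + X) ^ K - X ^ (3 * K + 3) := by
  induction K with
  | zero =>
    rw [show 2 * 0 + 2 = 2 by norm_num, Finset.sum_range_succ, Finset.sum_range_succ,
      Finset.sum_range_zero]
    norm_num
    ring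
  | succ K ih =>
    have hsum : ∑ m ∈ range (2 * K + 2),
        X ^ (m + m / 2) * (1 - X) ^ (2 * (K + 1) + 1 - m) * (1 + X) ^ (K + 1 - m / 2)
        = (1 - X) ^ 2 * (1 + X) *
          ∑ m ∈ range (2 * K + 2),
            X ^ (m + m / 2) * (1 - X) ^ (2 * K + 1 - m) * ((1 + X : PowerSeries ℤ)) ^ (K - m / 2) := by
      rw [Finset.mul_sum]
      refine Finset.sum_congr rfl fun m hm => ?_
      have hm' : m ≤ 2 * K + 1 := by simpa using Nat.lt_succ_iff.mp (by simpa [Nat.lt_succ_iff] using Finset.mem_range.mp hm)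
      have h1 : 2 * (K + 1) + 1 - m = (2 * K + 1 - m) + 2 := by omega
      have h2 : K + 1 - m / 2 = (K - m / 2) + 1 := by omega
      rw [h1, h2, pow_add, pow_succ]
      ring
    rw [show 2 * (K + 1) + 2 = (2 * K + 2) + 1 + 1 by ring, Finset.sum_range_succ,
      Finset.sum_range_succ, hsum]
    have e1 : (2 * K + 2) / 2 = K + 1 := by omega
    have e2 : (2 * K + 2 + 1) / 2 = K + 1 := by omega
    have e3 : 2 * (K + 1) + 1 - (2 * K + 2) = 1 := by omega
    have e4 : K + 1 - (2 * K + 2) / 2 = 0 := by omega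
    have e5 : 2 * (K + 1) + 1 - (2 * K + 2 + 1) = 0 := by omega
    have e6 : K + 1 - (2 * K + 2 + 1) / 2 = 0 := by omega
    have e7 : 2 * K + 2 + (2 * K + 2) / 2 = 3 * K + 3 := by omega
    have e8 : 2 * K + 2 + 1 + (2 * K + 2 + 1) / 2 = 3 * K + 4 := by omega
    rw [e3, e4, e5, e6, e7, e8]
    rw [show 2 * (K + 1) + 1 = (2 * K + 1) + 2 by ring,
      show 3 * (K + 1) + 3 = (3 * K + 3) + 3 by ring,
      pow_add, pow_add, pow_succ (1 + X : PowerSeries ℤ) K]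
    linear_combination ((1 - X : PowerSeries ℤ) ^ 2 * (1 + X)) * ih

lemma key (K : ℕ) :
    (1 - X - X ^ 2 : PowerSeries ℤ) * ∑ m ∈ Finset.range (2 * K + 2), psF m
    = 1 - X ^ 2 - X ^ (3 * K + 3) * (psU ^ (2 * K + 1)).val * (psV ^ K).val := by
  have hP : ((1 - X) ^ (2 * K + 1) * (1 + X) ^ K : PowerSeries ℤ) ≠ 0 :=
    mul_ne_zero (pow_ne_zero _ one_sub_X_ne) (pow_ne_zero _ one_add_X_ne)
  apply mul_right_cancel₀ hP
  have hterm : ∀ m ∈ Finset.range (2 * K + 2),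
      psF m * ((1 - X) ^ (2 * K + 1) * (1 + X) ^ K)
      = X ^ (m + m / 2) * (1 - X) ^ (2 * K + 1 - m) * (1 + X) ^ (K - m / 2) := by
    intro m hm
    have hm' : m ≤ 2 * K + 1 := by have := Finset.mem_range.mp hm; omega
    have h1 : (1 - X : PowerSeries ℤ) ^ (2 * K + 1) = (1 - X) ^ m * (1 - X) ^ (2 * K + 1 - m) := by
      rw [← pow_add]; congr 1; omega
    have h2 : (1 + X : PowerSeries ℤ) ^ K = (1 + X) ^ (m / 2) * (1 + X) ^ (K - m / 2) := by
      rw [← pow_add]; congr 1; omega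
    rw [psF, h1, h2]
    calc X ^ (m + m / 2) * (psU ^ m).val * (psV ^ (m / 2)).val *
        ((1 - X) ^ m * (1 - X) ^ (2 * K + 1 - m) * ((1 + X) ^ (m / 2) * (1 + X) ^ (K - m / 2)))
        = X ^ (m + m / 2) * (1 - X) ^ (2 * K + 1 - m) * (1 + X) ^ (K - m / 2) *
          (((psU ^ m).val * (1 - X) ^ m) * ((psV ^ (m / 2)).val * (1 + X) ^ (m / 2))) := by ring
      _ = _ := by rw [psU_cancel, psV_cancel]; ring
  rw [mul_assoc, Finset.sum_mul, Finset.sum_congr rfl hterm]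
  have hR : (1 - X ^ 2 - X ^ (3 * K + 3) * (psU ^ (2 * K + 1)).val * (psV ^ K).val : PowerSeries ℤ) *
      ((1 - X) ^ (2 * K + 1) * (1 + X) ^ K)
      = (1 - X ^ 2) * (1 - X) ^ (2 * K + 1) * (1 + X) ^ K - X ^ (3 * K + 3) := by
    have : (X ^ (3 * K + 3) * (psU ^ (2 * K + 1)).val * (psV ^ K).val : PowerSeries ℤ) *
        ((1 - X) ^ (2 * K + 1) * (1 + X) ^ K) = X ^ (3 * K + 3) := by
      calc (X ^ (3 * K + 3) * (psU ^ (2 * K + 1)).val * (psV ^ K).val : PowerSeries ℤ) *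
          ((1 - X) ^ (2 * K + 1) * (1 + X) ^ K)
          = X ^ (3 * K + 3) * (((psU ^ (2 * K + 1)).val * (1 - X) ^ (2 * K + 1)) *
            ((psV ^ K).val * (1 + X) ^ K)) := by ring
        _ = X ^ (3 * K + 3) := by rw [psU_cancel, psV_cancel]; ring
    calc _ = (1 - X ^ 2) * (1 - X) ^ (2 * K + 1) * (1 + X) ^ K -
          (X ^ (3 * K + 3) * (psU ^ (2 * K + 1)).val * (psV ^ K).val) *
          ((1 - X) ^ (2 * K + 1) * (1 + X) ^ K) := by ring
      _ = _ := by rw [this]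
  rw [hR]
  exact lemA K

lemma coeff_psF (n m : ℕ) :
    PowerSeries.coeff n (psF m) =
      ∑ ℓ ∈ Finset.range (n + 1 - m - m / 2),
        ((m + ℓ - 1).choose ℓ : ℤ) *
          ((m / 2 + (n - m - m / 2 - ℓ) - 1).choose (n - m - m / 2 - ℓ) : ℤ) *
          (-1 : ℤ) ^ (n - m - m / 2 - ℓ) := by
  rw [psF, mul_assoc, PowerSeries.coeff_X_pow_mul']
  by_cases h : m + m / 2 ≤ n
  · rw [if_pos h, PowerSeries.coeff_mul,
      Finset.Nat.sum_antidiagonal_eq_sum_range_succ_mk]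
    have hr : (n - (m + m / 2)).succ = n + 1 - m - m / 2 := by omega
    rw [hr]
    refine Finset.sum_congr rfl fun ℓ hℓ => ?_
    have hj : n - (m + m / 2) - ℓ = n - m - m / 2 - ℓ := by omega
    rw [hj, coeff_psU, coeff_psV]
    ring
  · rw [if_neg h, show n + 1 - m - m / 2 = 0 by omega, Finset.range_zero,
      Finset.sum_empty]

lemma coeff_zero_sum (K : ℕ) :
    PowerSeries.coeff 0 (∑ m ∈ Finset.range (2 * K + 2), psF m) = 1 := by
  rw [map_sum]
  rw [Finset.sum_eq_single 0]
  · rw [coeff_psF]; simp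
  · intro m _ hm
    rw [coeff_psF, show 0 + 1 - m - m / 2 = 0 by omega, Finset.range_zero, Finset.sum_empty]
  · intro h; exact absurd (Finset.mem_range.mpr (by omega)) h

lemma coeff_sum_fib (K : ℕ) : ∀ n, 1 ≤ n → n ≤ 3 * K + 2 →
    PowerSeries.coeff n (∑ m ∈ Finset.range (2 * K + 2), psF m) = (Nat.fib n : ℤ) := by
  set G : PowerSeries ℤ := ∑ m ∈ Finset.range (2 * K + 2), psF m with hG
  have hsplit : (1 - X - X ^ 2 : PowerSeries ℤ) * G = G - X * G - X ^ 2 * G := by ring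
  have hk := key K
  rw [hsplit] at hk
  have base1 : PowerSeries.coeff 1 G = 1 := by
    have h := congrArg (PowerSeries.coeff 1) hk
    rw [map_sub, map_sub, map_sub, map_sub] at h
    rw [show (1 : ℕ) = 0 + 1 from rfl, PowerSeries.coeff_succ_X_mul] at h
    rw [mul_assoc, PowerSeries.coeff_X_pow_mul', if_neg (by omega)] at h
    rw [PowerSeries.coeff_X_pow_mul', if_neg (by omega)] at h
    rw [PowerSeries.coeff_one, if_neg (by omega), PowerSeries.coeff_X_pow,
      if_neg (by omega), coeff_zero_sum] at h
    linarith [h]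
  have hrec : ∀ d : ℕ, d + 2 ≤ 3 * K + 2 →
      PowerSeries.coeff (d + 2) G =
        PowerSeries.coeff (d + 1) G + PowerSeries.coeff d G +
          (if d + 2 = 2 then -1 else 0) := by
    intro d hd
    have h := congrArg (PowerSeries.coeff (d + 2)) hk
    rw [map_sub, map_sub, map_sub, map_sub] at h
    have e1 : PowerSeries.coeff (d + 2) (X * G) = PowerSeries.coeff (d + 1) G := by
      rw [show d + 2 = (d + 1) + 1 by omega, PowerSeries.coeff_succ_X_mul]
    have e2 : PowerSeries.coeff (d + 2) (X ^ 2 * G) = PowerSeries.coeff d G :=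
      PowerSeries.coeff_X_pow_mul G 2 d
    rw [e1, e2] at h
    rw [mul_assoc, PowerSeries.coeff_X_pow_mul', if_neg (by omega)] at h
    rw [PowerSeries.coeff_one, if_neg (by omega), PowerSeries.coeff_X_pow] at h
    by_cases h2 : d + 2 = 2
    · rw [if_pos h2] at h ⊢
      linarith [h]
    · rw [if_neg h2] at h ⊢
      linarith [h]
  intro n
  induction n using Nat.strong_induction_on with
  | _ n ih =>
    intro h1 h2
    match n, h1 with
    | 1, _ => rw [base1]; norm_num
    | 2, _ =>
      have := hrec 0 (by omega)
      rw [if_pos rfl, base1, coeff_zero_sum] at this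
      rw [this]; norm_num
    | (d + 3), _ =>
      have hr := hrec (d + 1) (by omega)
      rw [if_neg (by omega)] at hr
      simp only [show d + 1 + 2 = d + 3 by omega, show d + 1 + 1 = d + 2 by omega] at hr
      rw [hr, ih (d + 2) (by omega) (by omega) (by omega),
        ih (d + 1) (by omega) (by omega) (by omega)]
      have hf : Nat.fib (d + 3) = Nat.fib (d + 1) + Nat.fib (d + 2) := by
        rw [show d + 3 = (d + 1) + 2 by omega, Nat.fib_add_two, show d + 1 + 1 = d + 2 by omega]
      rw [hf]
      push_cast
      ring

/-- for `n ≥ 1`,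
`F_n = Σ_{m=0}^{n} Σ_{ℓ=0}^{n-m-⌊m/2⌋} C(m+ℓ-1,ℓ) C(n-m-ℓ-1, n-m-⌊m/2⌋-ℓ) (-1)^{n-m-⌊m/2⌋-ℓ}`,
the inner sum being empty when `n - m - ⌊m/2⌋ < 0`. -/
theorem fib_double_sum (n : ℕ) (hn : 1 ≤ n) :
    (Nat.fib n : ℤ) =
      ∑ m ∈ Finset.range (n + 1), ∑ ℓ ∈ Finset.range (n + 1 - m - m / 2),
        genChoose ((m : ℤ) + (ℓ : ℤ) - 1) (ℓ : ℤ) *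
          genChoose ((n : ℤ) - (m : ℤ) - (ℓ : ℤ) - 1)
            ((n : ℤ) - (m : ℤ) - ((m / 2 : ℕ) : ℤ) - (ℓ : ℤ)) *
          (-1) ^ (n - m - m / 2 - ℓ) := by
  have hK := coeff_sum_fib n n hn (by omega)
  rw [map_sum] at hK
  rw [← hK]
  have h1 : ∀ m ∈ Finset.range (2 * n + 2), m ∉ Finset.range (n + 1) →
      PowerSeries.coeff n (psF m) = 0 := by
    intro m _ hm
    have hm' : n + 1 ≤ m := by simpa using hm
    rw [coeff_psF, show n + 1 - m - m / 2 = 0 by omega, Finset.range_zero, Finset.sum_empty]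
  rw [← Finset.sum_subset (Finset.range_subset_range.mpr (by omega : n + 1 ≤ 2 * n + 2)) h1]
  refine Finset.sum_congr rfl fun m hm => ?_
  rw [coeff_psF]
  refine Finset.sum_congr rfl fun ℓ hℓ => ?_
  have hm' : m ≤ n := by simpa [Nat.lt_succ_iff] using hm
  have hℓ' : ℓ < n + 1 - m - m / 2 := Finset.mem_range.mp hℓ
  have e2 : (n : ℤ) - (m : ℤ) - (ℓ : ℤ) - 1
      = ((m / 2 : ℕ) : ℤ) + ((n - m - m / 2 - ℓ : ℕ) : ℤ) - 1 := by omega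
  have e3 : (n : ℤ) - (m : ℤ) - ((m / 2 : ℕ) : ℤ) - (ℓ : ℤ) = ((n - m - m / 2 - ℓ : ℕ) : ℤ) := by
    omega
  rw [genChoose_eq m ℓ, e2, e3, genChoose_eq (m / 2) (n - m - m / 2 - ℓ)]
end

section
/- For every integer n ≥ 1, F_n = Σ_{m=0}^{n} Σ_{ℓ=0}^{⌊(n − m − ⌊m/2⌋)/2⌋} C(⌊m/2⌋ + ℓ − 1, ℓ) · C(n − 2⌊m/2⌋ − 2ℓ − 1, ⌊(m−1)/2⌋), where the inner sum is empty when n − m − ⌊m/2⌋ < 0, and C(a, b) denotes the generalized binomial coefficient a(a−1)⋯(a−b+1)/b! for an integer a (possibly negative) and a natural number b. -/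
namespace FibAux

def pn (k n : ℕ) : ℕ :=
  ∑ ℓ ∈ Finset.range (n / 2 + 1), (k + ℓ - 1).choose ℓ * (n + k - 2 * ℓ).choose k

def rn (k n : ℕ) : ℕ :=
  ∑ ℓ ∈ Finset.range (n / 2 + 1), (k + ℓ - 2).choose ℓ * (n + k - 2 * ℓ).choose k

def qn (k n : ℕ) : ℕ :=
  ∑ ℓ ∈ Finset.range (n / 2 + 1), (k + ℓ - 1).choose ℓ * (n + k - 1 - 2 * ℓ).choose (k - 1)

def sn (k n : ℕ) : ℕ :=
  ∑ ℓ ∈ Finset.range (n / 2 + 1), (k + ℓ - 2).choose ℓ * (n + k - 1 - 2 * ℓ).choose (k - 1)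

lemma rn_stab (k n M : ℕ) (hk : 1 ≤ k) (h : n / 2 + 1 ≤ M) :
    rn k n = ∑ ℓ ∈ Finset.range M, (k + ℓ - 2).choose ℓ * (n + k - 2 * ℓ).choose k := by
  refine Finset.sum_subset (Finset.range_subset_range.2 h) ?_
  intro ℓ _ hℓ
  simp only [Finset.mem_range, not_lt] at hℓ
  rw [Nat.choose_eq_zero_of_lt (show n + k - 2 * ℓ < k by omega), mul_zero]

lemma sn_stab (k n M : ℕ) (hk : 2 ≤ k) (h : n / 2 + 1 ≤ M) :
    sn k n = ∑ ℓ ∈ Finset.range M, (k + ℓ - 2).choose ℓ * (n + k - 1 - 2 * ℓ).choose (k - 1) := by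
  refine Finset.sum_subset (Finset.range_subset_range.2 h) ?_
  intro ℓ _ hℓ
  simp only [Finset.mem_range, not_lt] at hℓ
  rw [Nat.choose_eq_zero_of_lt (show n + k - 1 - 2 * ℓ < k - 1 by omega), mul_zero]

lemma pascal' (m k : ℕ) (hk : 1 ≤ k) : (m + 1).choose k = m.choose (k - 1) + m.choose k := by
  obtain ⟨k', rfl⟩ : ∃ k', k = k' + 1 := ⟨k - 1, by omega⟩
  simp [Nat.choose_succ_succ']

lemma pn_zero (n : ℕ) : pn 0 n = 1 := by
  rw [pn]
  rw [Finset.sum_eq_single 0]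
  · simp
  · intro ℓ _ hℓ
    rw [Nat.choose_eq_zero_of_lt (show 0 + ℓ - 1 < ℓ by omega), zero_mul]
  · intro h; exact absurd (Finset.mem_range.2 (by omega)) h

lemma sn_one (n : ℕ) : sn 1 n = 1 := by
  rw [sn]
  rw [Finset.sum_eq_single 0]
  · simp
  · intro ℓ _ hℓ
    rw [Nat.choose_eq_zero_of_lt (show 1 + ℓ - 2 < ℓ by omega), zero_mul]
  · intro h; exact absurd (Finset.mem_range.2 (by omega)) h

lemma pn_rec (k n : ℕ) (hk : 1 ≤ k) : pn k (n + 2) = pn k n + rn k (n + 2) := by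
  have h1 : (n + 2) / 2 + 1 = n / 2 + 1 + 1 := by omega
  rw [pn, rn, h1]
  conv_lhs => rw [Finset.sum_range_succ']
  conv_rhs => rw [Finset.sum_range_succ']
  have e1 : ∀ i ∈ Finset.range (n / 2 + 1),
      (k + (i + 1) - 1).choose (i + 1) * (n + 2 + k - 2 * (i + 1)).choose k
      = (k + i - 1).choose i * (n + k - 2 * i).choose k
        + (k + (i + 1) - 2).choose (i + 1) * (n + 2 + k - 2 * (i + 1)).choose k := by
    intro i _
    have h2 : k + (i + 1) - 1 = (k + i - 1) + 1 := by omega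
    have h3 : k + (i + 1) - 2 = k + i - 1 := by omega
    have h4 : n + 2 + k - 2 * (i + 1) = n + k - 2 * i := by omega
    rw [h2, h3, h4, Nat.choose_succ_succ', add_mul]
  rw [Finset.sum_congr rfl e1, Finset.sum_add_distrib, pn]
  have h5 : (k + 0 - 1).choose 0 = (k + 0 - 2).choose 0 := by simp
  rw [h5]
  ring

lemma qn_rec (k n : ℕ) (hk : 1 ≤ k) : qn k (n + 2) = qn k n + sn k (n + 2) := by
  have h1 : (n + 2) / 2 + 1 = n / 2 + 1 + 1 := by omega
  rw [qn, sn, h1]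
  conv_lhs => rw [Finset.sum_range_succ']
  conv_rhs => rw [Finset.sum_range_succ']
  have e1 : ∀ i ∈ Finset.range (n / 2 + 1),
      (k + (i + 1) - 1).choose (i + 1) * (n + 2 + k - 1 - 2 * (i + 1)).choose (k - 1)
      = (k + i - 1).choose i * (n + k - 1 - 2 * i).choose (k - 1)
        + (k + (i + 1) - 2).choose (i + 1) * (n + 2 + k - 1 - 2 * (i + 1)).choose (k - 1) := by
    intro i _
    have h2 : k + (i + 1) - 1 = (k + i - 1) + 1 := by omega
    have h3 : k + (i + 1) - 2 = k + i - 1 := by omega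
    have h4 : n + 2 + k - 1 - 2 * (i + 1) = n + k - 1 - 2 * i := by omega
    rw [h2, h3, h4, Nat.choose_succ_succ', add_mul]
  rw [Finset.sum_congr rfl e1, Finset.sum_add_distrib, qn]
  have h5 : (k + 0 - 1).choose 0 = (k + 0 - 2).choose 0 := by simp
  rw [h5]
  ring

lemma rn_rec (k n : ℕ) (hk : 1 ≤ k) : rn k (n + 1) = rn k n + pn (k - 1) (n + 1) := by
  have e1 : ∀ i ∈ Finset.range ((n + 1) / 2 + 1),
      (k + i - 2).choose i * (n + 1 + k - 2 * i).choose k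
      = (k + i - 2).choose i * (n + k - 2 * i).choose k
        + (k - 1 + i - 1).choose i * (n + 1 + (k - 1) - 2 * i).choose (k - 1) := by
    intro i hi
    simp only [Finset.mem_range] at hi
    have h2 : n + 1 + k - 2 * i = (n + k - 2 * i) + 1 := by omega
    have h4 : k - 1 + i - 1 = k + i - 2 := by omega
    have h5 : n + 1 + (k - 1) - 2 * i = n + k - 2 * i := by omega
    rw [h2, h4, h5, pascal' _ k hk, mul_add]
    ring
  rw [rn, Finset.sum_congr rfl e1, Finset.sum_add_distrib]
  rw [← rn_stab k n _ hk (by omega), ← pn]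

lemma sn_rec (k n : ℕ) (hk : 2 ≤ k) : sn k (n + 1) = sn k n + qn (k - 1) (n + 1) := by
  have e1 : ∀ i ∈ Finset.range ((n + 1) / 2 + 1),
      (k + i - 2).choose i * (n + 1 + k - 1 - 2 * i).choose (k - 1)
      = (k + i - 2).choose i * (n + k - 1 - 2 * i).choose (k - 1)
        + (k - 1 + i - 1).choose i * (n + 1 + (k - 1) - 1 - 2 * i).choose (k - 1 - 1) := by
    intro i hi
    simp only [Finset.mem_range] at hi
    have h2 : n + 1 + k - 1 - 2 * i = (n + k - 1 - 2 * i) + 1 := by omega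
    have h4 : k - 1 + i - 1 = k + i - 2 := by omega
    have h5 : n + 1 + (k - 1) - 1 - 2 * i = n + k - 1 - 2 * i := by omega
    rw [h2, h4, h5, pascal' _ (k - 1) (by omega), mul_add]
    ring
  rw [sn, Finset.sum_congr rfl e1, Finset.sum_add_distrib]
  rw [← sn_stab k n _ hk (by omega), ← qn]

lemma pn_small (k n : ℕ) (h : n ≤ 1) : pn k n = rn k n := by
  have : n / 2 + 1 = 1 := by omega
  rw [pn, rn, this, Finset.sum_range_one]
  simp

lemma qn_small (k n : ℕ) (h : n ≤ 1) : qn k n = sn k n := by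
  have : n / 2 + 1 = 1 := by omega
  rw [qn, sn, this, Finset.sum_range_one]
  simp

lemma rn_zero_eq (k : ℕ) : rn k 0 = pn (k - 1) 0 := by
  rw [pn, rn]
  simp [Finset.sum_range_one]

lemma sn_zero_eq (k : ℕ) (hk : 2 ≤ k) : sn k 0 = qn (k - 1) 0 := by
  rw [qn, sn]
  simp [Finset.sum_range_one]



noncomputable section

def Pf (k : ℕ) (N : ℤ) : ℤ := if 0 ≤ N then (pn k N.toNat : ℤ) else 0
def Rf (k : ℕ) (N : ℤ) : ℤ := if 0 ≤ N then (rn k N.toNat : ℤ) else 0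
def Sf (k : ℕ) (N : ℤ) : ℤ := if 0 ≤ N then (sn k N.toNat : ℤ) else 0
def Qf (k : ℕ) (N : ℤ) : ℤ :=
  if k = 0 then (if N = 0 then 1 else 0) else if 0 ≤ N then (qn k N.toNat : ℤ) else 0

lemma Pf_neg (k : ℕ) {N : ℤ} (h : N < 0) : Pf k N = 0 := if_neg (by omega)
lemma Rf_neg (k : ℕ) {N : ℤ} (h : N < 0) : Rf k N = 0 := if_neg (by omega)
lemma Sf_neg (k : ℕ) {N : ℤ} (h : N < 0) : Sf k N = 0 := if_neg (by omega)
lemma Qf_neg (k : ℕ) {N : ℤ} (hk : 1 ≤ k) (h : N < 0) : Qf k N = 0 := by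
  rw [Qf, if_neg (by omega), if_neg (by omega)]

lemma Pf_cast (k n : ℕ) : Pf k (n : ℤ) = (pn k n : ℤ) := by simp [Pf]
lemma Rf_cast (k n : ℕ) : Rf k (n : ℤ) = (rn k n : ℤ) := by simp [Rf]
lemma Sf_cast (k n : ℕ) : Sf k (n : ℤ) = (sn k n : ℤ) := by simp [Sf]
lemma Qf_cast (k n : ℕ) (hk : 1 ≤ k) : Qf k (n : ℤ) = (qn k n : ℤ) := by
  rw [Qf, if_neg (by omega), if_pos (by positivity)]
  simp

lemma Pf_zero' (N : ℤ) : Pf 0 N = if 0 ≤ N then 1 else 0 := by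
  rw [Pf]; split <;> simp [pn_zero]

lemma Pf_rec (k : ℕ) (hk : 1 ≤ k) (N : ℤ) : Pf k N = Pf k (N - 2) + Rf k N := by
  rcases lt_or_ge N 0 with h | h
  · rw [Pf_neg _ h, Pf_neg _ (by omega), Rf_neg _ h, add_zero]
  rcases lt_or_ge N 2 with h2 | h2
  · obtain ⟨n, rfl⟩ : ∃ n : ℕ, N = (n : ℤ) := ⟨N.toNat, by omega⟩
    have e : Pf k ((n : ℤ) - 2) = 0 := Pf_neg k (by omega)
    rw [e, Pf_cast, Rf_cast, zero_add, pn_small k n (by omega)]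
  · obtain ⟨n, rfl⟩ : ∃ n : ℕ, N = ((n : ℤ) + 2) := ⟨(N - 2).toNat, by omega⟩
    rw [show (n : ℤ) + 2 = ((n + 2 : ℕ) : ℤ) by push_cast; ring,
      show ((n + 2 : ℕ) : ℤ) - 2 = ((n : ℕ) : ℤ) by push_cast; ring,
      Pf_cast, Pf_cast, Rf_cast, pn_rec k n hk]
    push_cast; ring

lemma Qf_rec (k : ℕ) (hk : 1 ≤ k) (N : ℤ) : Qf k N = Qf k (N - 2) + Sf k N := by
  rcases lt_or_ge N 0 with h | h
  · rw [Qf_neg _ hk h, Qf_neg _ hk (by omega), Sf_neg _ h, add_zero]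
  rcases lt_or_ge N 2 with h2 | h2
  · obtain ⟨n, rfl⟩ : ∃ n : ℕ, N = (n : ℤ) := ⟨N.toNat, by omega⟩
    have e : Qf k ((n : ℤ) - 2) = 0 := Qf_neg k hk (by omega)
    rw [e, Qf_cast _ _ hk, Sf_cast, zero_add, qn_small k n (by omega)]
  · obtain ⟨n, rfl⟩ : ∃ n : ℕ, N = ((n : ℤ) + 2) := ⟨(N - 2).toNat, by omega⟩
    rw [show (n : ℤ) + 2 = ((n + 2 : ℕ) : ℤ) by push_cast; ring,
      show ((n + 2 : ℕ) : ℤ) - 2 = ((n : ℕ) : ℤ) by push_cast; ring,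
      Qf_cast _ _ hk, Qf_cast _ _ hk, Sf_cast, qn_rec k n hk]
    push_cast; ring

lemma Rf_rec (k : ℕ) (hk : 1 ≤ k) (N : ℤ) : Rf k N = Rf k (N - 1) + Pf (k - 1) N := by
  rcases lt_or_ge N 0 with h | h
  · rw [Rf_neg _ h, Rf_neg _ (by omega), Pf_neg _ h, add_zero]
  rcases lt_or_ge N 1 with h2 | h2
  · obtain rfl : N = ((0 : ℕ) : ℤ) := by omega
    have e : Rf k (((0 : ℕ) : ℤ) - 1) = 0 := Rf_neg k (by omega)
    rw [e, Rf_cast, Pf_cast, zero_add, rn_zero_eq]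
  · obtain ⟨n, rfl⟩ : ∃ n : ℕ, N = ((n : ℤ) + 1) := ⟨(N - 1).toNat, by omega⟩
    rw [show (n : ℤ) + 1 = ((n + 1 : ℕ) : ℤ) by push_cast; ring,
      show ((n + 1 : ℕ) : ℤ) - 1 = ((n : ℕ) : ℤ) by push_cast; ring,
      Rf_cast, Rf_cast, Pf_cast, rn_rec k n hk]
    push_cast; ring

lemma Sf_rec (k : ℕ) (hk : 1 ≤ k) (N : ℤ) : Sf k N = Sf k (N - 1) + Qf (k - 1) N := by
  rcases eq_or_lt_of_le hk with h1 | h1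
  · -- k = 1
    obtain rfl : k = 1 := h1.symm
    rcases lt_or_ge N 0 with h | h
    · rw [Sf_neg _ h, Sf_neg _ (by omega), Qf, if_pos rfl, if_neg (by omega), add_zero]
    rcases lt_or_ge N 1 with h2 | h2
    · obtain rfl : N = ((0 : ℕ) : ℤ) := by omega
      have e : Sf 1 (((0 : ℕ) : ℤ) - 1) = 0 := Sf_neg 1 (by omega)
      rw [e, Sf_cast, show (1 : ℕ) - 1 = 0 from rfl, Qf, if_pos rfl,
        if_pos (by norm_num), sn_one]
      norm_num
    · obtain ⟨n, rfl⟩ : ∃ n : ℕ, N = ((n : ℤ) + 1) := ⟨(N - 1).toNat, by omega⟩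
      rw [show (n : ℤ) + 1 = ((n + 1 : ℕ) : ℤ) by push_cast; ring,
        show ((n + 1 : ℕ) : ℤ) - 1 = ((n : ℕ) : ℤ) by push_cast; ring,
        Sf_cast, Sf_cast, Qf, if_pos rfl, if_neg (by positivity), sn_one, sn_one]
      norm_num
  · -- 2 ≤ k
    have hk2 : 2 ≤ k := h1
    have hk1 : 1 ≤ k - 1 := by omega
    rcases lt_or_ge N 0 with h | h
    · rw [Sf_neg _ h, Sf_neg _ (by omega), Qf_neg _ hk1 h, add_zero]
    rcases lt_or_ge N 1 with h2 | h2
    · obtain rfl : N = ((0 : ℕ) : ℤ) := by omega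
      have e : Sf k (((0 : ℕ) : ℤ) - 1) = 0 := Sf_neg k (by omega)
      rw [e, Sf_cast, Qf_cast _ _ hk1, zero_add, sn_zero_eq k hk2]
    · obtain ⟨n, rfl⟩ : ∃ n : ℕ, N = ((n : ℤ) + 1) := ⟨(N - 1).toNat, by omega⟩
      rw [show (n : ℤ) + 1 = ((n + 1 : ℕ) : ℤ) by push_cast; ring,
        show ((n + 1 : ℕ) : ℤ) - 1 = ((n : ℕ) : ℤ) by push_cast; ring,
        Sf_cast, Sf_cast, Qf_cast _ _ hk1, sn_rec k n hk2]
      push_cast; ring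

lemma Pf_fib (k : ℕ) (hk : 1 ≤ k) (N : ℤ) :
    Pf k N - Pf k (N - 1) - Pf k (N - 2) = Pf (k - 1) N - Pf k (N - 3) := by
  have h1 := Pf_rec k hk N
  have h2 := Pf_rec k hk (N - 1)
  have h3 := Rf_rec k hk N
  rw [show N - 1 - 2 = N - 3 by ring] at h2
  linarith

lemma Qf_fib (k : ℕ) (hk : 1 ≤ k) (N : ℤ) :
    Qf k N - Qf k (N - 1) - Qf k (N - 2) = Qf (k - 1) N - Qf k (N - 3) := by
  have h1 := Qf_rec k hk N
  have h2 := Qf_rec k hk (N - 1)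
  have h3 := Sf_rec k hk N
  rw [show N - 1 - 2 = N - 3 by ring] at h2
  linarith

def T (n : ℕ) : ℤ :=
  ∑ k ∈ Finset.range (n + 1), (Pf k ((n : ℤ) - 3 * k - 1) + Qf (k + 1) ((n : ℤ) - 3 * k - 3))

lemma T_ext (n M : ℕ) (h : n + 1 ≤ M) :
    T n = ∑ k ∈ Finset.range M, (Pf k ((n : ℤ) - 3 * k - 1) + Qf (k + 1) ((n : ℤ) - 3 * k - 3)) := by
  refine Finset.sum_subset (Finset.range_subset_range.2 h) ?_
  intro k _ hk
  simp only [Finset.mem_range, not_lt] at hk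
  rw [Pf_neg _ (by push_cast; omega), Qf_neg _ (by omega) (by push_cast; omega), add_zero]

lemma T_rec (n : ℕ) (hn : 2 ≤ n) : T (n + 2) = T (n + 1) + T n := by
  rw [T_ext (n + 2) (n + 3) (by omega), T_ext (n + 1) (n + 3) (by omega),
    T_ext n (n + 3) (by omega)]
  rw [← sub_eq_zero, ← Finset.sum_add_distrib, ← Finset.sum_sub_distrib]
  have hP : ∑ x ∈ Finset.range (n + 3),
      (Pf x ((↑(n + 2) : ℤ) - 3 * ↑x - 1) - Pf x ((↑(n + 1) : ℤ) - 3 * ↑x - 1)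
        - Pf x ((n : ℤ) - 3 * ↑x - 1)) = 0 := by
    rw [Finset.sum_range_succ']
    have e1 : ∀ i ∈ Finset.range (n + 2),
        (Pf (i + 1) ((↑(n + 2) : ℤ) - 3 * ↑(i + 1) - 1)
          - Pf (i + 1) ((↑(n + 1) : ℤ) - 3 * ↑(i + 1) - 1)
          - Pf (i + 1) ((n : ℤ) - 3 * ↑(i + 1) - 1))
        = Pf i ((n : ℤ) - 3 * (i : ℤ) - 2)
          - Pf (i + 1) ((n : ℤ) - 3 * ((i + 1 : ℕ) : ℤ) - 2) := by
      intro i _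
      have hfib := Pf_fib (i + 1) (by omega) ((n : ℤ) - 3 * (i : ℤ) - 2)
      have a1 : (↑(n + 2) : ℤ) - 3 * ↑(i + 1) - 1 = (n : ℤ) - 3 * (i : ℤ) - 2 := by
        push_cast; ring
      have a2 : (↑(n + 1) : ℤ) - 3 * ↑(i + 1) - 1 = (n : ℤ) - 3 * (i : ℤ) - 2 - 1 := by
        push_cast; ring
      have a3 : (n : ℤ) - 3 * ((i + 1 : ℕ) : ℤ) - 1 = (n : ℤ) - 3 * (i : ℤ) - 2 - 2 := by
        push_cast; ring
      have a4 : (n : ℤ) - 3 * ((i + 1 : ℕ) : ℤ) - 2 = (n : ℤ) - 3 * (i : ℤ) - 2 - 3 := by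
        push_cast; ring
      have a5 : i + 1 - 1 = i := by omega
      rw [a1, a2, a3, a4, hfib, a5]
    rw [Finset.sum_congr rfl e1,
      Finset.sum_range_sub' (fun j => Pf j ((n : ℤ) - 3 * (j : ℤ) - 2)) (n + 2)]
    have b0 : Pf 0 ((n : ℤ) - 3 * ((0 : ℕ) : ℤ) - 2) = 1 := by
      rw [Pf_zero', if_pos (by push_cast; omega)]
    have b1 : Pf (n + 2) ((n : ℤ) - 3 * ((n + 2 : ℕ) : ℤ) - 2) = 0 :=
      Pf_neg _ (by push_cast; omega)
    have c1 : Pf 0 ((↑(n + 2) : ℤ) - 3 * ((0 : ℕ) : ℤ) - 1) = 1 := by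
      rw [Pf_zero', if_pos (by push_cast; omega)]
    have c2 : Pf 0 ((↑(n + 1) : ℤ) - 3 * ((0 : ℕ) : ℤ) - 1) = 1 := by
      rw [Pf_zero', if_pos (by push_cast; omega)]
    have c3 : Pf 0 ((n : ℤ) - 3 * ((0 : ℕ) : ℤ) - 1) = 1 := by
      rw [Pf_zero', if_pos (by push_cast; omega)]
    rw [b0, b1, c1, c2, c3]
    ring
  have hQ : ∑ x ∈ Finset.range (n + 3),
      (Qf (x + 1) ((↑(n + 2) : ℤ) - 3 * ↑x - 3) - Qf (x + 1) ((↑(n + 1) : ℤ) - 3 * ↑x - 3)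
        - Qf (x + 1) ((n : ℤ) - 3 * ↑x - 3)) = 0 := by
    have e1 : ∀ x ∈ Finset.range (n + 3),
        (Qf (x + 1) ((↑(n + 2) : ℤ) - 3 * ↑x - 3) - Qf (x + 1) ((↑(n + 1) : ℤ) - 3 * ↑x - 3)
          - Qf (x + 1) ((n : ℤ) - 3 * ↑x - 3))
        = Qf x ((n : ℤ) - 3 * (x : ℤ) - 1)
          - Qf (x + 1) ((n : ℤ) - 3 * ((x + 1 : ℕ) : ℤ) - 1) := by
      intro x _
      have hfib := Qf_fib (x + 1) (by omega) ((n : ℤ) - 3 * (x : ℤ) - 1)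
      have a1 : (↑(n + 2) : ℤ) - 3 * ↑x - 3 = (n : ℤ) - 3 * (x : ℤ) - 1 := by push_cast; ring
      have a2 : (↑(n + 1) : ℤ) - 3 * ↑x - 3 = (n : ℤ) - 3 * (x : ℤ) - 1 - 1 := by
        push_cast; ring
      have a3 : (n : ℤ) - 3 * (x : ℤ) - 3 = (n : ℤ) - 3 * (x : ℤ) - 1 - 2 := by ring
      have a4 : (n : ℤ) - 3 * ((x + 1 : ℕ) : ℤ) - 1 = (n : ℤ) - 3 * (x : ℤ) - 1 - 3 := by
        push_cast; ring
      have a5 : x + 1 - 1 = x := by omega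
      rw [a1, a2, a3, a4, hfib, a5]
    rw [Finset.sum_congr rfl e1,
      Finset.sum_range_sub' (fun j => Qf j ((n : ℤ) - 3 * (j : ℤ) - 1)) (n + 3)]
    have b0 : Qf 0 ((n : ℤ) - 3 * ((0 : ℕ) : ℤ) - 1) = 0 := by
      rw [Qf, if_pos rfl, if_neg (by push_cast; omega)]
    have b1 : Qf (n + 3) ((n : ℤ) - 3 * ((n + 3 : ℕ) : ℤ) - 1) = 0 :=
      Qf_neg _ (by omega) (by push_cast; omega)
    rw [b0, b1]
    ring
  calc ∑ x ∈ Finset.range (n + 3),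
        (Pf x ((↑(n + 2) : ℤ) - 3 * ↑x - 1) + Qf (x + 1) ((↑(n + 2) : ℤ) - 3 * ↑x - 3) -
          (Pf x ((↑(n + 1) : ℤ) - 3 * ↑x - 1) + Qf (x + 1) ((↑(n + 1) : ℤ) - 3 * ↑x - 3) +
            (Pf x ((n : ℤ) - 3 * ↑x - 1) + Qf (x + 1) ((n : ℤ) - 3 * ↑x - 3))))
      = ∑ x ∈ Finset.range (n + 3),
        ((Pf x ((↑(n + 2) : ℤ) - 3 * ↑x - 1) - Pf x ((↑(n + 1) : ℤ) - 3 * ↑x - 1)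
            - Pf x ((n : ℤ) - 3 * ↑x - 1))
          + (Qf (x + 1) ((↑(n + 2) : ℤ) - 3 * ↑x - 3)
            - Qf (x + 1) ((↑(n + 1) : ℤ) - 3 * ↑x - 3)
            - Qf (x + 1) ((n : ℤ) - 3 * ↑x - 3))) := by
        refine Finset.sum_congr rfl fun x _ => by ring
    _ = 0 := by rw [Finset.sum_add_distrib, hP, hQ]; ring


-- base values and fib
lemma T_one : T 1 = 1 := by
  rw [T]
  decide

lemma T_two : T 2 = 1 := by
  rw [T]; decide

lemma T_three : T 3 = 2 := by
  rw [T]; decide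

lemma T_four : T 4 = 3 := by
  rw [T]; decide

lemma T_fib : ∀ n : ℕ, 1 ≤ n → T n = (Nat.fib n : ℤ) := by
  intro n
  induction n using Nat.strong_induction_on with
  | _ n ih =>
    intro hn
    match n, hn with
    | 1, _ => simpa using T_one
    | 2, _ => simpa using T_two
    | 3, _ => rw [T_three]; decide
    | 4, _ => rw [T_four]; decide
    | (m + 5), _ =>
      have hf : Nat.fib (m + 5) = Nat.fib (m + 3) + Nat.fib (m + 4) := by
        rw [show m + 5 = (m + 3) + 2 from rfl, Nat.fib_add_two,
          show (m + 3) + 1 = m + 4 from rfl]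
      rw [show m + 5 = (m + 3) + 2 from rfl, T_rec (m + 3) (by omega),
        show (m + 3) + 2 = m + 5 from rfl, hf,
        show (m + 3) + 1 = m + 4 from rfl,
        ih (m + 4) (by omega) (by omega), ih (m + 3) (by omega) (by omega)]
      push_cast
      ring

lemma genChoose_negb {a b : ℤ} (h : b < 0) : genChoose a b = 0 := if_neg (by omega)

lemma genChoose_natCast (a b : ℕ) : genChoose (a : ℤ) (b : ℤ) = (a.choose b : ℤ) := by
  rw [genChoose, if_pos (Int.natCast_nonneg b)]
  simp only [Int.toNat_natCast]
  have hprod : (∏ i ∈ Finset.range b, ((a : ℤ) - (i : ℤ))) = (a.descFactorial b : ℤ) := by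
    rcases le_or_gt b a with h | h
    · rw [Nat.descFactorial_eq_prod_range, Nat.cast_prod]
      refine Finset.prod_congr rfl fun i hi => ?_
      simp only [Finset.mem_range] at hi
      rw [Nat.cast_sub (by omega)]
    · refine Eq.trans (Finset.prod_eq_zero (Finset.mem_range.2 h) (by simp)) ?_
      rw [Nat.descFactorial_eq_zero_iff_lt.2 h, Nat.cast_zero]
  rw [hprod, Nat.choose_eq_descFactorial_div_factorial]
  exact (Int.natCast_div (a.descFactorial b) (b.factorial)).symm

lemma genChoose_fst (k ℓ : ℕ) :
    genChoose ((k : ℤ) + (ℓ : ℤ) - 1) (ℓ : ℤ) = (((k + ℓ - 1).choose ℓ : ℕ) : ℤ) := by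
  rcases Nat.eq_zero_or_pos (k + ℓ) with h | h
  · obtain ⟨rfl, rfl⟩ : k = 0 ∧ ℓ = 0 := by omega
    simp [genChoose]
  · rw [show (k : ℤ) + (ℓ : ℤ) - 1 = ((k + ℓ - 1 : ℕ) : ℤ) by omega, genChoose_natCast]

def Gm (n m : ℕ) : ℤ :=
  if m % 2 = 1 then Pf (m / 2) ((n : ℤ) - 3 * ((m / 2 : ℕ) : ℤ) - 1)
  else Qf (m / 2) ((n : ℤ) - 3 * ((m / 2 : ℕ) : ℤ))

lemma Gm_vanish (n m : ℕ) (h : n + 1 ≤ m) : Gm n m = 0 := by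
  rw [Gm]
  split
  · exact Pf_neg _ (by omega)
  · exact Qf_neg _ (by omega) (by omega)

lemma sum_pair (M : ℕ) (g : ℕ → ℤ) :
    ∑ m ∈ Finset.range (2 * M), g m = ∑ k ∈ Finset.range M, (g (2 * k) + g (2 * k + 1)) := by
  induction M with
  | zero => simp
  | succ M ih =>
    rw [show 2 * (M + 1) = (2 * M + 1) + 1 by ring, Finset.sum_range_succ,
      Finset.sum_range_succ, Finset.sum_range_succ, ih]
    ring

lemma T_eq' (n : ℕ) (hn : 1 ≤ n) :
    ∑ k ∈ Finset.range (n + 1), (Qf k ((n : ℤ) - 3 * k) + Pf k ((n : ℤ) - 3 * k - 1)) = T n := by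
  have hQ : ∑ k ∈ Finset.range (n + 1), Qf k ((n : ℤ) - 3 * k)
      = ∑ k ∈ Finset.range (n + 1), Qf (k + 1) ((n : ℤ) - 3 * ((k + 1 : ℕ) : ℤ)) := by
    have h1 : ∑ k ∈ Finset.range (n + 2), Qf k ((n : ℤ) - 3 * k)
        = ∑ k ∈ Finset.range (n + 1), Qf k ((n : ℤ) - 3 * k)
          + Qf (n + 1) ((n : ℤ) - 3 * ((n + 1 : ℕ) : ℤ)) := Finset.sum_range_succ _ _
    have h2 : ∑ k ∈ Finset.range (n + 2), Qf k ((n : ℤ) - 3 * k)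
        = (∑ k ∈ Finset.range (n + 1), Qf (k + 1) ((n : ℤ) - 3 * ((k + 1 : ℕ) : ℤ)))
          + Qf 0 ((n : ℤ) - 3 * ((0 : ℕ) : ℤ)) := Finset.sum_range_succ' _ _
    have h3 : Qf (n + 1) ((n : ℤ) - 3 * ((n + 1 : ℕ) : ℤ)) = 0 :=
      Qf_neg _ (by omega) (by push_cast; omega)
    have h4 : Qf 0 ((n : ℤ) - 3 * ((0 : ℕ) : ℤ)) = 0 := by
      rw [Qf, if_pos rfl, if_neg (by push_cast; omega)]
    rw [h3, add_zero] at h1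
    rw [h4, add_zero] at h2
    rw [← h1, h2]
  rw [Finset.sum_add_distrib, hQ, T, Finset.sum_add_distrib]
  rw [add_comm]
  congr 1
  refine Finset.sum_congr rfl fun k _ => ?_
  rw [show (n : ℤ) - 3 * ((k + 1 : ℕ) : ℤ) = (n : ℤ) - 3 * (k : ℤ) - 3 by push_cast; ring]

end
end FibAux

/-- for `n ≥ 1`,
`F_n = Σ_{m=0}^{n} Σ_{ℓ=0}^{⌊(n-m-⌊m/2⌋)/2⌋} C(⌊m/2⌋+ℓ-1, ℓ) C(n-2⌊m/2⌋-2ℓ-1, ⌊(m-1)/2⌋)`,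
the inner sum being empty when `n - m - ⌊m/2⌋ < 0`. -/

theorem fib_double_sum' (n : ℕ) (hn : 1 ≤ n) :
    (Nat.fib n : ℤ) =
      ∑ m ∈ Finset.range (n + 1),
        if n < m + m / 2 then 0
        else
          ∑ ℓ ∈ Finset.range ((n - m - m / 2) / 2 + 1),
            genChoose (((m / 2 : ℕ) : ℤ) + (ℓ : ℤ) - 1) (ℓ : ℤ) *
              genChoose ((n : ℤ) - 2 * ((m / 2 : ℕ) : ℤ) - 2 * (ℓ : ℤ) - 1)
                (((m : ℤ) - 1) / 2) := by
  rw [← FibAux.T_fib n hn]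
  have step1 : (∑ m ∈ Finset.range (n + 1),
      if n < m + m / 2 then (0 : ℤ)
      else
        ∑ ℓ ∈ Finset.range ((n - m - m / 2) / 2 + 1),
          genChoose (((m / 2 : ℕ) : ℤ) + (ℓ : ℤ) - 1) (ℓ : ℤ) *
            genChoose ((n : ℤ) - 2 * ((m / 2 : ℕ) : ℤ) - 2 * (ℓ : ℤ) - 1)
              (((m : ℤ) - 1) / 2))
      = ∑ m ∈ Finset.range (n + 1), FibAux.Gm n m := by
    refine Finset.sum_congr rfl fun m _ => ?_
    by_cases hm2 : m % 2 = 1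
    · obtain ⟨k, rfl⟩ : ∃ k, m = 2 * k + 1 := ⟨m / 2, by omega⟩
      rw [FibAux.Gm, if_pos (show (2 * k + 1) % 2 = 1 by omega)]
      rw [show (2 * k + 1) / 2 = k by omega]
      by_cases hc : n < (2 * k + 1) + k
      · rw [if_pos hc]
        exact (FibAux.Pf_neg k (show (n : ℤ) - 3 * (k : ℤ) - 1 < 0 by omega)).symm
      · rw [if_neg hc]
        rw [show (n : ℤ) - 3 * (k : ℤ) - 1 = ((n - 3 * k - 1 : ℕ) : ℤ) by omega,
          FibAux.Pf_cast, FibAux.pn, Nat.cast_sum,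
          show (n - (2 * k + 1) - k) / 2 + 1 = (n - 3 * k - 1) / 2 + 1 by omega]
        refine Finset.sum_congr rfl fun ℓ hℓ => ?_
        simp only [Finset.mem_range] at hℓ
        rw [FibAux.genChoose_fst k ℓ,
          show (((2 * k + 1 : ℕ) : ℤ) - 1) / 2 = ((k : ℕ) : ℤ) by omega,
          show (n : ℤ) - 2 * ((k : ℕ) : ℤ) - 2 * (ℓ : ℤ) - 1
            = (((n - 3 * k - 1) + k - 2 * ℓ : ℕ) : ℤ) by omega,
          FibAux.genChoose_natCast]
        push_cast
        ring
    · obtain ⟨k, rfl⟩ : ∃ k, m = 2 * k := ⟨m / 2, by omega⟩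
      rw [FibAux.Gm, if_neg (show ¬ (2 * k) % 2 = 1 by omega)]
      rw [show (2 * k) / 2 = k by omega]
      rcases Nat.eq_zero_or_pos k with rfl | hk
      · rw [if_neg (show ¬ n < 2 * 0 + (2 * 0) / 2 by omega)]
        rw [FibAux.Qf, if_pos rfl, if_neg (by push_cast; omega)]
        refine Finset.sum_eq_zero fun ℓ _ => ?_
        rw [FibAux.genChoose_negb (show (((2 * 0 : ℕ) : ℤ) - 1) / 2 < 0 by decide), mul_zero]
      · by_cases hc : n < (2 * k) + k
        · rw [if_pos hc]
          exact (FibAux.Qf_neg k hk (show (n : ℤ) - 3 * (k : ℤ) < 0 by omega)).symm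
        · rw [if_neg hc]
          rw [show (n : ℤ) - 3 * (k : ℤ) = ((n - 3 * k : ℕ) : ℤ) by omega,
            FibAux.Qf_cast _ _ hk, FibAux.qn, Nat.cast_sum,
            show (n - 2 * k - k) / 2 + 1 = (n - 3 * k) / 2 + 1 by omega]
          refine Finset.sum_congr rfl fun ℓ hℓ => ?_
          simp only [Finset.mem_range] at hℓ
          rw [FibAux.genChoose_fst k ℓ,
            show (((2 * k : ℕ) : ℤ) - 1) / 2 = ((k - 1 : ℕ) : ℤ) by omega,
            show (n : ℤ) - 2 * ((k : ℕ) : ℤ) - 2 * (ℓ : ℤ) - 1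
              = (((n - 3 * k) + k - 1 - 2 * ℓ : ℕ) : ℤ) by omega,
            FibAux.genChoose_natCast]
          push_cast
          ring
  rw [step1]
  have step2 : ∑ m ∈ Finset.range (n + 1), FibAux.Gm n m
      = ∑ m ∈ Finset.range (2 * (n + 1)), FibAux.Gm n m :=
    Finset.sum_subset (Finset.range_subset_range.2 (by omega))
      (fun m _ hm => FibAux.Gm_vanish n m (by simp only [Finset.mem_range, not_lt] at hm; omega))
  rw [step2, FibAux.sum_pair]
  have step3 : ∑ k ∈ Finset.range (n + 1), (FibAux.Gm n (2 * k) + FibAux.Gm n (2 * k + 1))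
      = ∑ k ∈ Finset.range (n + 1),
          (FibAux.Qf k ((n : ℤ) - 3 * k) + FibAux.Pf k ((n : ℤ) - 3 * k - 1)) := by
    refine Finset.sum_congr rfl fun k _ => ?_
    rw [FibAux.Gm, FibAux.Gm, if_neg (show ¬ (2 * k) % 2 = 1 by omega),
      if_pos (show (2 * k + 1) % 2 = 1 by omega),
      show (2 * k) / 2 = k by omega, show (2 * k + 1) / 2 = k by omega]
  rw [step3, FibAux.T_eq' n hn]
end
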